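/- arXiv:1804.06959 — 7 statements merged into one kernel-verified Lean document; each statement's English description precedes it below -/
import Mathlib

section
/- There exists a function f : ℕ × ℕ → ℕ such that if 𝒮 is a collection of distinct s-element sets with |𝒮| ≥ f(s,n), then there is a subcollection 𝒮' ⊆ 𝒮 with |𝒮'| = n and a set J with 0 ≤ |J| < s such that S₁ ∩ S₂ = J for all distinct S₁, S₂ ∈ 𝒮'. -/
universe u

theorem sunflower_aux : ∀ (s : ℕ) {α : Type u} [DecidableEq α] (m : ℕ)
    (𝒮 : Finset (Finset α)),
    (∀ S ∈ 𝒮, S.card = s) → s.factorial * m ^ s < 𝒮.card →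
    ∃ 𝒮' ⊆ 𝒮, 𝒮'.card = m + 1 ∧ ∃ J : Finset α,
      ∀ S₁ ∈ 𝒮', ∀ S₂ ∈ 𝒮', S₁ ≠ S₂ → S₁ ∩ S₂ = J := by
  intro s
  induction s with
  | zero =>
    intro α _ m 𝒮 hcard hbig
    exfalso
    have h1 : 𝒮.card ≤ 1 := Finset.card_le_one.2 fun a ha b hb =>
      (Finset.card_eq_zero.1 (hcard a ha)).trans (Finset.card_eq_zero.1 (hcard b hb)).symm
    simp at hbig
    omega
  | succ s ih =>
    intro α _ m 𝒮 hcard hbig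
    classical
    -- choose a maximal pairwise disjoint subfamily D of 𝒮
    set P : Finset (Finset α) → Prop :=
      fun 𝒟 => ∀ S₁ ∈ 𝒟, ∀ S₂ ∈ 𝒟, S₁ ≠ S₂ → S₁ ∩ S₂ = ∅ with hP
    have hne : (𝒮.powerset.filter P).Nonempty := ⟨∅, by simp [hP]⟩
    obtain ⟨D, hDmem, hDmax⟩ := Finset.exists_max_image (𝒮.powerset.filter P)
      Finset.card hne
    rw [Finset.mem_filter, Finset.mem_powerset] at hDmem
    obtain ⟨hDsub, hDdisj⟩ := hDmem
    by_cases hbigD : m + 1 ≤ D.card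
    · -- D already contains a sunflower with empty core
      obtain ⟨𝒮', h𝒮'sub, h𝒮'card⟩ := Finset.exists_subset_card_eq hbigD
      exact ⟨𝒮', h𝒮'sub.trans hDsub, h𝒮'card, ∅,
        fun S₁ h₁ S₂ h₂ hne => hDdisj S₁ (h𝒮'sub h₁) S₂ (h𝒮'sub h₂) hne⟩
    · push_neg at hbigD
      have hDle : D.card ≤ m := by omega
      set A : Finset α := D.biUnion id with hA
      -- every member of 𝒮 meets A
      have hmeet : ∀ S ∈ 𝒮, ∃ x ∈ A, x ∈ S := by
        intro S hS
        by_contra hcon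
        push_neg at hcon
        have hSnotD : S ∉ D := by
          intro hSD
          have hx : ∃ x, x ∈ S :=
            Finset.card_pos.1 (by rw [hcard S hS]; omega)
          obtain ⟨x, hx⟩ := hx
          exact hcon x (Finset.mem_biUnion.2 ⟨S, hSD, hx⟩) hx
        have hins : insert S D ∈ 𝒮.powerset.filter P := by
          rw [Finset.mem_filter, Finset.mem_powerset]
          constructor
          · exact Finset.insert_subset hS hDsub
          · intro S₁ h₁ S₂ h₂ hne12
            rcases Finset.mem_insert.1 h₁ with h₁e | h₁d <;>
              rcases Finset.mem_insert.1 h₂ with h₂e | h₂d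
            · exact absurd (h₁e.trans h₂e.symm) hne12
            · subst h₁e
              apply Finset.eq_empty_of_forall_notMem
              intro x hx
              rw [Finset.mem_inter] at hx
              exact hcon x (Finset.mem_biUnion.2 ⟨S₂, h₂d, hx.2⟩) hx.1
            · subst h₂e
              apply Finset.eq_empty_of_forall_notMem
              intro x hx
              rw [Finset.mem_inter] at hx
              exact hcon x (Finset.mem_biUnion.2 ⟨S₁, h₁d, hx.1⟩) hx.2
            · exact hDdisj S₁ h₁d S₂ h₂d hne12
        have := hDmax _ hins
        rw [Finset.card_insert_of_notMem hSnotD] at this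
        omega
      -- |A| ≤ (s+1) * m
      have hAcard : A.card ≤ (s + 1) * m := by
        calc A.card ≤ ∑ S ∈ D, (id S).card := Finset.card_biUnion_le
          _ ≤ ∑ _S ∈ D, (s + 1) := Finset.sum_le_sum fun S hS => by
              rw [id, hcard S (hDsub hS)]
          _ = D.card * (s + 1) := by rw [Finset.sum_const, smul_eq_mul]
          _ ≤ m * (s + 1) := Nat.mul_le_mul_right _ hDle
          _ = (s + 1) * m := Nat.mul_comm _ _
      -- pigeonhole: some x ∈ A is in many sets
      have hcover : 𝒮 ⊆ A.biUnion fun x => 𝒮.filter fun S => x ∈ S := by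
        intro S hS
        obtain ⟨x, hxA, hxS⟩ := hmeet S hS
        exact Finset.mem_biUnion.2 ⟨x, hxA, Finset.mem_filter.2 ⟨hS, hxS⟩⟩
      have hsum : 𝒮.card ≤ ∑ x ∈ A, (𝒮.filter fun S => x ∈ S).card :=
        le_trans (Finset.card_le_card hcover) Finset.card_biUnion_le
      have hx : ∃ x ∈ A, s.factorial * m ^ s < (𝒮.filter fun S => x ∈ S).card := by
        by_contra hcon
        push_neg at hcon
        have : ∑ x ∈ A, (𝒮.filter fun S => x ∈ S).card ≤ A.card * (s.factorial * m ^ s) := by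
          calc ∑ x ∈ A, (𝒮.filter fun S => x ∈ S).card
              ≤ ∑ _x ∈ A, s.factorial * m ^ s := Finset.sum_le_sum hcon
            _ = A.card * (s.factorial * m ^ s) := by rw [Finset.sum_const, smul_eq_mul]
        have hle : A.card * (s.factorial * m ^ s) ≤ (s + 1) * m * (s.factorial * m ^ s) :=
          Nat.mul_le_mul_right _ hAcard
        have heq : (s + 1) * m * (s.factorial * m ^ s) = (s + 1).factorial * m ^ (s + 1) := by
          rw [Nat.factorial_succ, pow_succ]
          ring
        omega
      obtain ⟨x, hxA, hxmany⟩ := hx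
      -- pass to the link of x
      set 𝒯 : Finset (Finset α) := (𝒮.filter fun S => x ∈ S).image fun S => S.erase x with hT
      have hinj : Set.InjOn (fun S : Finset α => S.erase x) ↑(𝒮.filter fun S => x ∈ S) := by
        intro S₁ h₁ S₂ h₂ h
        simp only [Finset.coe_filter, Set.mem_setOf_eq] at h₁ h₂
        have h' : S₁.erase x = S₂.erase x := h
        rw [← Finset.insert_erase h₁.2, ← Finset.insert_erase h₂.2, h']
      have hTcard : s.factorial * m ^ s < 𝒯.card := by
        rw [hT, Finset.card_image_of_injOn hinj]
        exact hxmany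
      have hTsets : ∀ T ∈ 𝒯, T.card = s := by
        intro T hT'
        obtain ⟨S, hS, rfl⟩ := Finset.mem_image.1 hT'
        rw [Finset.mem_filter] at hS
        rw [Finset.card_erase_of_mem hS.2, hcard S hS.1]
        omega
      obtain ⟨𝒯', h𝒯'sub, h𝒯'card, J', hJ'⟩ := ih m 𝒯 hTsets hTcard
      have hxnot : ∀ T ∈ 𝒯', x ∉ T := by
        intro T hT'
        obtain ⟨S, _, rfl⟩ := Finset.mem_image.1 (h𝒯'sub hT')
        exact Finset.notMem_erase x S
      refine ⟨𝒯'.image (insert x), ?_, ?_, insert x J', ?_⟩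
      · intro S hS
        obtain ⟨T, hT', rfl⟩ := Finset.mem_image.1 hS
        obtain ⟨S', hS', rfl⟩ := Finset.mem_image.1 (h𝒯'sub hT')
        rw [Finset.mem_filter] at hS'
        rw [Finset.insert_erase hS'.2]
        exact hS'.1
      · rw [Finset.card_image_of_injOn, h𝒯'card]
        intro T₁ h₁ T₂ h₂ h
        have := congrArg (fun S => Finset.erase S x) h
        simpa [Finset.erase_insert (hxnot T₁ h₁), Finset.erase_insert (hxnot T₂ h₂)] using this
      · intro S₁ h₁ S₂ h₂ hne12
        obtain ⟨T₁, hT₁, rfl⟩ := Finset.mem_image.1 h₁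
        obtain ⟨T₂, hT₂, rfl⟩ := Finset.mem_image.1 h₂
        have hTne : T₁ ≠ T₂ := fun h => hne12 (by rw [h])
        rw [← hJ' T₁ hT₁ T₂ hT₂ hTne]
        ext y
        simp only [Finset.mem_inter, Finset.mem_insert]
        tauto

theorem statement1 :
    ∃ f : ℕ × ℕ → ℕ, ∀ s n : ℕ, 0 < s → 0 < n →
      ∀ {α : Type u} [DecidableEq α] (𝒮 : Finset (Finset α)),
        (∀ S ∈ 𝒮, S.card = s) → f (s, n) ≤ 𝒮.card →
        ∃ 𝒮' ⊆ 𝒮, 𝒮'.card = n ∧ ∃ J : Finset α, J.card < s ∧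
          ∀ S₁ ∈ 𝒮', ∀ S₂ ∈ 𝒮', S₁ ≠ S₂ → S₁ ∩ S₂ = J := by
  refine ⟨fun p => p.1.factorial * (p.2 - 1) ^ p.1 + 1, ?_⟩
  intro s n hs hn α _ 𝒮 hcard hbig
  rcases eq_or_lt_of_le (show 1 ≤ n from hn) with h1 | h2
  · -- n = 1
    have hne : 𝒮.Nonempty := Finset.card_pos.1 (Nat.lt_of_lt_of_le (Nat.succ_pos _) hbig)
    obtain ⟨S, hS⟩ := hne
    refine ⟨{S}, Finset.singleton_subset_iff.2 hS, by simp [← h1], ∅, by simpa using hs, ?_⟩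
    intro S₁ h₁ S₂ h₂ hne12
    rw [Finset.mem_singleton] at h₁ h₂
    exact absurd (h₁.trans h₂.symm) hne12
  · -- n ≥ 2
    obtain ⟨𝒮', hsub, hcard', J, hJ⟩ := sunflower_aux s (n - 1) 𝒮 hcard hbig
    have hcard'' : 𝒮'.card = n := by omega
    have h2' : 1 < 𝒮'.card := by omega
    obtain ⟨S₁, h₁, S₂, h₂, hne12⟩ := Finset.one_lt_card.1 h2'
    refine ⟨𝒮', hsub, hcard'', J, ?_, hJ⟩
    have hJeq : S₁ ∩ S₂ = J := hJ S₁ h₁ S₂ h₂ hne12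
    have hJsub : J ⊆ S₁ := hJeq ▸ Finset.inter_subset_left
    have hJle : J.card ≤ s := le_trans (Finset.card_le_card hJsub) (le_of_eq (hcard S₁ (hsub h₁)))
    rcases eq_or_lt_of_le hJle with heq | hlt
    · exfalso
      have hJ1 : J = S₁ := Finset.eq_of_subset_of_card_le hJsub
        (by rw [heq, hcard S₁ (hsub h₁)])
      have h12 : S₁ ⊆ S₂ := by
        rw [← hJ1]; exact hJeq ▸ Finset.inter_subset_right
      exact hne12 (Finset.eq_of_subset_of_card_le h12
        (by rw [hcard S₁ (hsub h₁), hcard S₂ (hsub h₂)]))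
    · exact hlt
end

section
/- Let M be a finite matroid, let k be a nonnegative integer, and let 𝒞 be a collection of circuits of M such that, for some J ⊆ E(M) with |J| ≤ k, we have C ∩ C' = J for all distinct C, C' ∈ 𝒞. Then for every subcollection {C₁, …, C_{2^k}} ⊆ 𝒞 consisting of 2^k distinct circuits, there is a circuit of M contained in (C₁ ∪ ⋯ ∪ C_{2^k}) − J. -/
open Set

/-- A circuit of a matroid: a minimal dependent set. -/
def IsCircuit {α : Type*} (M : Matroid α) (C : Set α) : Prop :=
  M.Dep C ∧ ∀ D, D ⊂ C → ¬ M.Dep D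

open scoped Classical

section Aux

variable {α : Type*} {M : Matroid α}

/-- Every finite dependent set contains a circuit. -/
lemma exists_circuit_subset_aux {D : Set α} (hD : M.Dep D) (hfin : D.Finite) :
    ∃ C, C ⊆ D ∧ IsCircuit M C := by
  have hS : {C : Set α | C ⊆ D ∧ M.Dep C}.Finite :=
    hfin.finite_subsets.subset (fun C hC => hC.1)
  obtain ⟨C, hC, hmin⟩ := hS.exists_minimal ⟨D, Subset.rfl, hD⟩
  refine ⟨C, hC.1, hC.2, fun D' hlt hdep => ?_⟩
  have := hmin (y := D') ⟨hlt.subset.trans hC.1, hdep⟩ hlt.subset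
  exact hlt.ne (subset_antisymm hlt.subset this)

/-- Circuit elimination. -/
lemma circuit_elim_aux {C₁ C₂ : Set α} {e : α} (hfin : M.E.Finite)
    (h1 : IsCircuit M C₁) (h2 : IsCircuit M C₂) (hne : C₁ ≠ C₂)
    (he1 : e ∈ C₁) (he2 : e ∈ C₂) :
    ∃ D, IsCircuit M D ∧ D ⊆ (C₁ ∪ C₂) \ {e} := by
  have hC1E : C₁ ⊆ M.E := h1.1.subset_ground
  have hC2E : C₂ ⊆ M.E := h2.1.subset_ground
  set X := C₁ ∪ C₂ with hX
  have hXE : X ⊆ M.E := union_subset hC1E hC2E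
  have hXfin : X.Finite := hfin.subset hXE
  have hdep : M.Dep (X \ {e}) := by
    by_contra hcon
    have hindep : M.Indep (X \ {e}) :=
      M.indep_of_not_dep hcon (diff_subset.trans hXE)
    -- pick g ∈ C₁ \ C₂
    have hnss : ¬ C₁ ⊆ C₂ := by
      intro hss
      exact h2.2 C₁ (ssubset_of_subset_of_ne hss hne) h1.1
    obtain ⟨g, hgC1, hgC2⟩ := not_subset.mp hnss
    have hI1 : M.Indep (C₁ \ {g}) := by
      refine M.indep_of_not_dep (h1.2 _ ?_) ((diff_subset.trans hC1E))
      exact diff_singleton_ssubset.mpr hgC1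
    obtain ⟨I, hI, hsubI⟩ := hI1.subset_isBasis_of_subset
      (diff_subset.trans subset_union_left) hXE
    have hgI : g ∉ I := by
      intro hgI
      have hC1I : C₁ ⊆ I := by
        intro x hx
        by_cases hxg : x = g
        · exact hxg ▸ hgI
        · exact hsubI ⟨hx, hxg⟩
      exact h1.1.not_indep (hI.indep.subset hC1I)
    obtain ⟨h, hhC2, hhI⟩ := not_subset.mp
      (fun hss => h2.1.not_indep (hI.indep.subset hss))
    have hgh : g ≠ h := fun hgh => hgC2 (hgh ▸ hhC2)
    -- the assumed independent set is a basis of X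
    obtain ⟨I', hI', hsubI'⟩ := hindep.subset_isBasis_of_subset diff_subset hXE
    have hI'eq : I' = X \ {e} := by
      by_cases heI' : e ∈ I'
      · exfalso
        have : I' = X := subset_antisymm hI'.subset (fun x hx => by
          by_cases hxe : x = e
          · exact hxe ▸ heI'
          · exact hsubI' ⟨hx, hxe⟩)
        exact (h1.1.superset (subset_union_left.trans this.symm.subset)
          (this ▸ hXE)).not_indep hI'.indep
      · exact subset_antisymm (fun x hx => ⟨hI'.subset hx, fun hxe => heI' (hxe ▸ hx)⟩)
          hsubI'
    have hcard : I.ncard = I'.ncard := by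
      have := hI.encard_eq_encard hI'
      rw [Set.ncard_def, Set.ncard_def, this]
    have hIX : I ⊆ X \ {g, h} := fun x hx =>
      ⟨hI.subset hx, by
        rintro (rfl | rfl)
        · exact hgI hx
        · exact hhI hx⟩
    have hghX : ({g, h} : Set α) ⊆ X := by
      rintro x (rfl | rfl)
      · exact subset_union_left hgC1
      · exact subset_union_right hhC2
    have h2le : 2 ≤ X.ncard := by
      have := Set.ncard_le_ncard hghX hXfin
      rwa [Set.ncard_pair hgh] at this
    have hle : I.ncard ≤ X.ncard - 2 := by
      have h1' := Set.ncard_le_ncard hIX hXfin.diff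
      rwa [Set.ncard_diff hghX (Set.toFinite _), Set.ncard_pair hgh] at h1'
    have heq : I'.ncard = X.ncard - 1 := by
      rw [hI'eq, Set.ncard_diff (singleton_subset_iff.mpr (subset_union_left he1))
        (Set.toFinite _), Set.ncard_singleton]
    omega
  obtain ⟨C, hCsub, hC⟩ := exists_circuit_subset_aux hdep hXfin.diff
  exact ⟨C, hC, hCsub⟩

/-- Pair down: replace circuits through `e` by circuits avoiding `e`. -/
lemma pairdown_aux (hfin : M.E.Finite) (J : Set α) (hJi : M.Indep J) (e : α) :
    ∀ n (𝒟 : Finset (Set α)), (𝒟.filter (fun C => e ∈ C)).card ≤ n →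
      (∀ C ∈ 𝒟, IsCircuit M C) →
      (∀ C ∈ 𝒟, ∀ C' ∈ 𝒟, C ≠ C' → C ∩ C' ⊆ J) →
      ∃ 𝒟' : Finset (Set α), (∀ C ∈ 𝒟', IsCircuit M C ∧ e ∉ C) ∧
        (∀ C ∈ 𝒟', ∀ C' ∈ 𝒟', C ≠ C' → C ∩ C' ⊆ J \ {e}) ∧
        (∀ C ∈ 𝒟', C ⊆ ⋃ D ∈ 𝒟, (D : Set α)) ∧
        (𝒟.filter (fun C => e ∉ C)).card + (𝒟.filter (fun C => e ∈ C)).card / 2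
          ≤ 𝒟'.card := by
  intro n
  induction n with
  | zero =>
    intro 𝒟 hb hcirc hpair
    refine ⟨𝒟.filter (fun C => e ∉ C), ?_, ?_, ?_, ?_⟩
    · intro C hC
      rw [Finset.mem_filter] at hC
      exact ⟨hcirc C hC.1, hC.2⟩
    · intro C hC C' hC' hne
      rw [Finset.mem_filter] at hC hC'
      intro x hx
      exact ⟨hpair C hC.1 C' hC'.1 hne hx, fun hxe => hC.2 (hxe ▸ hx.1)⟩
    · intro C hC
      rw [Finset.mem_filter] at hC
      exact subset_biUnion_of_mem (u := fun D => (D : Set α)) hC.1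
    · omega
  | succ n IH =>
    intro 𝒟 hb hcirc hpair
    by_cases hb1 : (𝒟.filter (fun C => e ∈ C)).card ≤ 1
    · -- same construction as base case
      refine ⟨𝒟.filter (fun C => e ∉ C), ?_, ?_, ?_, ?_⟩
      · intro C hC
        rw [Finset.mem_filter] at hC
        exact ⟨hcirc C hC.1, hC.2⟩
      · intro C hC C' hC' hne
        rw [Finset.mem_filter] at hC hC'
        intro x hx
        exact ⟨hpair C hC.1 C' hC'.1 hne hx, fun hxe => hC.2 (hxe ▸ hx.1)⟩
      · intro C hC
        rw [Finset.mem_filter] at hC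
        exact subset_biUnion_of_mem (u := fun D => (D : Set α)) hC.1
      · omega
    · push_neg at hb1
      obtain ⟨C₁, hC₁f, C₂, hC₂f, h12⟩ := Finset.one_lt_card.mp hb1
      rw [Finset.mem_filter] at hC₁f hC₂f
      obtain ⟨hC₁𝒟, he1⟩ := hC₁f
      obtain ⟨hC₂𝒟, he2⟩ := hC₂f
      obtain ⟨D, hD, hDsub⟩ := circuit_elim_aux hfin (hcirc _ hC₁𝒟) (hcirc _ hC₂𝒟)
        h12 he1 he2
      have heD : e ∉ D := fun heD => (hDsub heD).2 rfl
      have hDsub' : D ⊆ C₁ ∪ C₂ := fun x hx => (hDsub hx).1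
      set 𝒟₀ := (𝒟.erase C₁).erase C₂ with h𝒟₀
      have hhelp : ∀ C' ∈ 𝒟₀, D ∩ C' ⊆ J := by
        intro C' hC' x hx
        have hC'₂ : C' ≠ C₂ := Finset.ne_of_mem_erase hC'
        have hC'₁ : C' ≠ C₁ := Finset.ne_of_mem_erase (Finset.mem_of_mem_erase hC')
        have hC'𝒟 : C' ∈ 𝒟 := Finset.mem_of_mem_erase (Finset.mem_of_mem_erase hC')
        rcases hDsub' hx.1 with h | h
        · exact hpair C₁ hC₁𝒟 C' hC'𝒟 (Ne.symm hC'₁) ⟨h, hx.2⟩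
        · exact hpair C₂ hC₂𝒟 C' hC'𝒟 (Ne.symm hC'₂) ⟨h, hx.2⟩
      have hD𝒟₀ : D ∉ 𝒟₀ := by
        intro hmem
        have : D ⊆ J := by
          intro x hx
          exact hhelp D hmem ⟨hx, hx⟩
        exact hD.1.not_indep (hJi.subset this)
      set 𝒟₂ := insert D 𝒟₀ with h𝒟₂
      have hC₂e : C₂ ∈ 𝒟.erase C₁ := Finset.mem_erase.mpr ⟨Ne.symm h12, hC₂𝒟⟩
      -- circuits
      have hcirc₂ : ∀ C ∈ 𝒟₂, IsCircuit M C := by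
        intro C hC
        rcases Finset.mem_insert.mp hC with rfl | hC
        · exact hD
        · exact hcirc C (Finset.mem_of_mem_erase (Finset.mem_of_mem_erase hC))
      -- pairwise
      have hpair₂ : ∀ C ∈ 𝒟₂, ∀ C' ∈ 𝒟₂, C ≠ C' → C ∩ C' ⊆ J := by
        intro C hC C' hC' hne
        rcases Finset.mem_insert.mp hC with h | hC0
        · subst h
          rcases Finset.mem_insert.mp hC' with h' | hC'0
          · exact absurd h'.symm hne
          · exact hhelp C' hC'0
        · rcases Finset.mem_insert.mp hC' with h' | hC'0
          · subst h'
            intro x hx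
            exact hhelp C hC0 ⟨hx.2, hx.1⟩
          · exact hpair C (Finset.mem_of_mem_erase (Finset.mem_of_mem_erase hC0)) C'
              (Finset.mem_of_mem_erase (Finset.mem_of_mem_erase hC'0)) hne
      -- filter cards
      have hbf : (𝒟₂.filter (fun C => e ∈ C)).card
          = (𝒟.filter (fun C => e ∈ C)).card - 2 := by
        rw [h𝒟₂, Finset.filter_insert, if_neg heD, h𝒟₀, Finset.filter_erase,
          Finset.filter_erase,
          Finset.card_erase_of_mem (Finset.mem_erase.mpr
            ⟨Ne.symm h12, Finset.mem_filter.mpr ⟨hC₂𝒟, he2⟩⟩),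
          Finset.card_erase_of_mem (Finset.mem_filter.mpr ⟨hC₁𝒟, he1⟩)]
        omega
      have hc1f : C₁ ∉ Finset.filter (fun C => e ∉ C) 𝒟 :=
        fun h => (Finset.mem_filter.mp h).2 he1
      have hc2f : C₂ ∉ Finset.filter (fun C => e ∉ C) 𝒟 :=
        fun h => (Finset.mem_filter.mp h).2 he2
      have hf0 : Finset.filter (fun C => e ∉ C) 𝒟₀
          = Finset.filter (fun C => e ∉ C) 𝒟 := by
        rw [h𝒟₀, Finset.filter_erase, Finset.filter_erase,
          Finset.erase_eq_of_notMem hc1f, Finset.erase_eq_of_notMem hc2f]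
      have hDf : D ∉ Finset.filter (fun C => e ∉ C) 𝒟₀ :=
        fun h => hD𝒟₀ (Finset.mem_filter.mp h).1
      have haf : (𝒟₂.filter (fun C => e ∉ C)).card
          = (𝒟.filter (fun C => e ∉ C)).card + 1 := by
        rw [h𝒟₂, Finset.filter_insert, if_pos heD,
          Finset.card_insert_of_notMem hDf, hf0]
      obtain ⟨𝒟', h1', h2', h3', h4'⟩ := IH 𝒟₂ (by omega) hcirc₂ hpair₂
      refine ⟨𝒟', h1', h2', ?_, by omega⟩
      intro C hC x hx
      rcases mem_iUnion₂.mp (h3' C hC hx) with ⟨E', hE', hxE'⟩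
      rcases Finset.mem_insert.mp hE' with rfl | hE'
      · rcases hDsub' hxE' with h | h
        · exact mem_biUnion hC₁𝒟 h
        · exact mem_biUnion hC₂𝒟 h
      · exact mem_biUnion (Finset.mem_of_mem_erase (Finset.mem_of_mem_erase hE')) hxE'

/-- Main induction. -/
lemma key_aux (hfin : M.E.Finite) :
    ∀ k (J : Set α) (𝒟 : Finset (Set α)), M.Indep J → J.ncard ≤ k →
      (∀ C ∈ 𝒟, IsCircuit M C) →
      (∀ C ∈ 𝒟, ∀ C' ∈ 𝒟, C ≠ C' → C ∩ C' ⊆ J) →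
      2 ^ k ≤ 𝒟.card →
      ∃ C, IsCircuit M C ∧ C ⊆ (⋃ D ∈ 𝒟, (D : Set α)) \ J := by
  have triv : ∀ (𝒟 : Finset (Set α)), (∀ C ∈ 𝒟, IsCircuit M C) → 1 ≤ 𝒟.card →
      ∃ C, IsCircuit M C ∧ C ⊆ (⋃ D ∈ 𝒟, (D : Set α)) \ (∅ : Set α) := by
    intro 𝒟 hcirc hcard
    obtain ⟨C, hC⟩ := Finset.card_pos.mp hcard
    exact ⟨C, hcirc C hC, by
      rw [diff_empty]
      exact subset_biUnion_of_mem (u := fun D => (D : Set α)) hC⟩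
  intro k
  induction k with
  | zero =>
    intro J 𝒟 hJi hJk hcirc hpair hcard
    have hJfin : J.Finite := hfin.subset hJi.subset_ground
    have hJ : J = ∅ := by
      rw [← Set.ncard_eq_zero hJfin]; omega
    rw [hJ]
    exact triv 𝒟 hcirc (by simpa using hcard)
  | succ k IH =>
    intro J 𝒟 hJi hJk hcirc hpair hcard
    rcases J.eq_empty_or_nonempty with rfl | ⟨e, he⟩
    · exact triv 𝒟 hcirc (le_trans (Nat.one_le_two_pow) hcard)
    · have hJfin : J.Finite := hfin.subset hJi.subset_ground
      obtain ⟨𝒟', h1', h2', h3', h4'⟩ := pairdown_aux hfin J hJi e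
        (𝒟.filter (fun C => e ∈ C)).card 𝒟 le_rfl hcirc hpair
      have hcards := Finset.card_filter_add_card_filter_not
        (s := 𝒟) (p := fun C => e ∈ C)
      have h2k : 2 ^ k ≤ 𝒟'.card := by
        have h2 : 2 ^ (k + 1) = 2 ^ k * 2 := by ring
        omega
      have hJ'card : (J \ {e}).ncard ≤ k := by
        have h1 := Set.ncard_diff (singleton_subset_iff.mpr he) (Set.toFinite _)
        have h2 : 0 < J.ncard := (Set.ncard_pos hJfin).mpr ⟨e, he⟩
        rw [h1, Set.ncard_singleton]
        omega
      obtain ⟨C, hC, hCsub⟩ := IH (J \ {e}) 𝒟' (hJi.subset diff_subset) hJ'card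
        (fun C hC => (h1' C hC).1) h2' h2k
      refine ⟨C, hC, ?_⟩
      intro x hx
      obtain ⟨hx1, hx2⟩ := hCsub hx
      rcases mem_iUnion₂.mp hx1 with ⟨E', hE', hxE'⟩
      refine ⟨h3' E' hE' hxE', fun hxJ => ?_⟩
      have hxe : x = e := by
        by_contra hxe
        exact hx2 ⟨hxJ, hxe⟩
      exact (h1' E' hE').2 (hxe ▸ hxE')

end Aux

theorem statement2 {α : Type*} (M : Matroid α) (_hfin : M.E.Finite) (k : ℕ)
    (𝒞 : Set (Set α)) (h𝒞 : ∀ C ∈ 𝒞, IsCircuit M C)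
    (J : Set α) (hJ : J ⊆ M.E) (hJk : J.ncard ≤ k)
    (hint : ∀ C ∈ 𝒞, ∀ C' ∈ 𝒞, C ≠ C' → C ∩ C' = J)
    (𝒞' : Finset (Set α)) (hsub : ↑𝒞' ⊆ 𝒞) (hcard : 𝒞'.card = 2 ^ k) :
    ∃ C, IsCircuit M C ∧ C ⊆ (⋃ D ∈ 𝒞', D) \ J := by
  have hcirc : ∀ C ∈ 𝒞', IsCircuit M C := fun C hC => h𝒞 C (hsub hC)
  have hJi : M.Indep J := by
    by_cases h2 : ∃ C ∈ 𝒞', ∃ C' ∈ 𝒞', C ≠ C'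
    · obtain ⟨C, hC, C', hC', hne⟩ := h2
      have hJeq : C ∩ C' = J := hint C (hsub hC) C' (hsub hC') hne
      have hJC : J ⊆ C := hJeq ▸ inter_subset_left
      have hJneC : J ≠ C := by
        intro hEq
        have hsub2 : C ⊆ C' := by
          intro x hx
          have hx' : x ∈ C ∩ C' := by rw [hJeq, hEq]; exact hx
          exact hx'.2
        exact (h𝒞 C' (hsub hC')).2 C (ssubset_of_subset_of_ne hsub2 hne)
          (h𝒞 C (hsub hC)).1
      exact M.indep_of_not_dep
        ((h𝒞 C (hsub hC)).2 J (ssubset_of_subset_of_ne hJC hJneC)) hJ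
    · push_neg at h2
      have hk0 : k = 0 := by
        by_contra hk
        have h1lt : 1 < 2 ^ k := Nat.one_lt_two_pow_iff.mpr hk
        rw [← hcard] at h1lt
        obtain ⟨a, ha, b, hb, hab⟩ := Finset.one_lt_card.mp h1lt
        exact hab (h2 a ha b hb)
      have : J = ∅ := by
        rw [← Set.ncard_eq_zero (_hfin.subset hJ)]
        omega
      rw [this]; exact M.empty_indep
  have hpair : ∀ C ∈ 𝒞', ∀ C' ∈ 𝒞', C ≠ C' → C ∩ C' ⊆ J := fun C hC C' hC' hne =>
    (hint C (hsub hC) C' (hsub hC') hne).subset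
  exact key_aux _hfin k J 𝒞' hJi hJk hcirc hpair (hcard ▸ le_rfl)
end

section
/- There exists a function g : ℕ × ℕ → ℕ such that for all positive integers ℓ and d, if a finite matroid M has at least g(ℓ,d) distinct circuits of size ℓ, then M has a collection of d pairwise disjoint circuits. -/
open Set

universe u

/-- A "circuit of the contraction of `M` by `K`" (when `K` is independent): a minimal set `C`
disjoint from `K` such that `C ∪ K` is dependent. -/
def KCircuit {α : Type*} (M : Matroid α) (K C : Set α) : Prop :=
  C ⊆ M.E \ K ∧ M.Dep (C ∪ K) ∧ ∀ D, D ⊂ C → M.Indep (D ∪ K)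

/-- Bound for the inner recursion. -/
def Hb (q : ℕ) : ℕ → ℕ
  | 0 => 2
  | j + 1 => Hb q j * q + 1

/-- The main bound function. -/
def Gfun : ℕ → ℕ → ℕ
  | 0, _ => 1
  | (ℓ + 1), d => d * ((ℓ + 1) * Hb (Gfun ℓ (2 * d)) ℓ) + 1

lemma Hb_pos (q j : ℕ) : 1 ≤ Hb q j := by
  cases j with
  | zero => simp [Hb]
  | succ j => simp [Hb]

lemma Gfun_pos (ℓ d : ℕ) : 1 ≤ Gfun ℓ d := by
  cases ℓ with
  | zero => simp [Gfun]
  | succ ℓ => simp [Gfun]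

section Matroid

variable {α : Type u} {M : Matroid α} {K : Set α}

attribute [local instance] Classical.propDecidable

lemma exists_kcircuit (hKE : K ⊆ M.E) :
    ∀ n (X : Set α), X.ncard ≤ n → X.Finite → X ⊆ M.E \ K → M.Dep (X ∪ K) →
      ∃ D, D ⊆ X ∧ KCircuit M K D := by
  intro n
  induction n with
  | zero =>
    intro X hn hfin hXE hdep
    have hX0 : X = ∅ := by rwa [Nat.le_zero, Set.ncard_eq_zero hfin] at hn
    subst hX0
    exact ⟨∅, subset_rfl, hXE, hdep,
      fun D hD => absurd (Set.subset_empty_iff.mp hD.subset) hD.ne⟩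
  | succ n IH =>
    intro X hn hfin hXE hdep
    by_cases h : ∃ Y, Y ⊂ X ∧ M.Dep (Y ∪ K)
    · obtain ⟨Y, hYX, hYdep⟩ := h
      have hY : Y.ncard ≤ n := by
        have := Set.ncard_lt_ncard hYX hfin
        omega
      obtain ⟨D, hD, hDc⟩ := IH Y hY (hfin.subset hYX.subset) (hYX.subset.trans hXE) hYdep
      exact ⟨D, hD.trans hYX.subset, hDc⟩
    · push_neg at h
      refine ⟨X, subset_rfl, hXE, hdep, fun D hD => ?_⟩
      have hDE : D ∪ K ⊆ M.E :=
        union_subset ((hD.subset.trans hXE).trans diff_subset) hKE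
      exact Matroid.indep_of_not_dep (h D hD) hDE

lemma KCircuit.nonempty' (hK : M.Indep K) {C : Set α} (hC : KCircuit M K C) : C.Nonempty := by
  rw [Set.nonempty_iff_ne_empty]
  rintro rfl
  exact hC.2.1.not_indep (by simpa using hK)

lemma kcircuit_elimination (hE : M.E.Finite) (hKE : K ⊆ M.E) {C1 C2 : Set α}
    (h1 : KCircuit M K C1) (h2 : KCircuit M K C2) (hne : C1 ≠ C2)
    {e : α} (he1 : e ∈ C1) (he2 : e ∈ C2) :
    M.Dep (((C1 ∪ C2) \ {e}) ∪ K) := by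
  have hC1E : C1 ⊆ M.E := h1.1.trans diff_subset
  have hC2E : C2 ⊆ M.E := h2.1.trans diff_subset
  have hXE : C1 ∪ C2 ∪ K ⊆ M.E := union_subset (union_subset hC1E hC2E) hKE
  have hXfin : (C1 ∪ C2 ∪ K).Finite := hE.subset hXE
  rw [Matroid.dep_iff]
  refine ⟨fun hI => ?_, union_subset (diff_subset.trans (union_subset hC1E hC2E)) hKE⟩
  -- find f ∈ C1 \ C2
  have hf : (C1 \ C2).Nonempty := by
    rw [Set.nonempty_iff_ne_empty]
    intro h0
    have hsub : C1 ⊆ C2 := by rwa [Set.diff_eq_empty] at h0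
    exact (h2.2.2 C1 (hsub.ssubset_of_ne hne)).not_dep h1.2.1
  obtain ⟨f, hfC1, hfC2⟩ := hf
  have hind : M.Indep ((C1 \ {f}) ∪ K) := h1.2.2 _ (Set.sdiff_singleton_ssubset.mpr hfC1)
  obtain ⟨B, hB, hsubB⟩ := hind.subset_isBasis_of_subset
    (union_subset_union_left K (diff_subset.trans subset_union_left)) hXE
  have hfB : f ∉ B := by
    intro hfB
    have hsub1 : C1 ∪ K ⊆ B := by
      rintro x (hx | hx)
      · by_cases hxf : x = f
        · subst hxf; exact hfB
        · exact hsubB (Or.inl ⟨hx, hxf⟩)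
      · exact hsubB (Or.inr hx)
    exact h1.2.1.not_indep (hB.indep.subset hsub1)
  have hg : ∃ g ∈ C2, g ∉ B := by
    by_contra hg
    push_neg at hg
    exact h2.2.1.not_indep
      (hB.indep.subset (union_subset hg fun x hx => hsubB (Or.inr hx)))
  obtain ⟨g, hgC2, hgB⟩ := hg
  have hgf : g ≠ f := fun h => hfC2 (h ▸ hgC2)
  have heK : e ∉ K := (h1.1 he1).2
  have hIeq : ((C1 ∪ C2) \ {e}) ∪ K = (C1 ∪ C2 ∪ K) \ {e} := by
    ext x
    simp only [mem_union, mem_diff, mem_singleton_iff]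
    constructor
    · rintro (⟨h, hne⟩ | h)
      · exact ⟨Or.inl h, hne⟩
      · exact ⟨Or.inr h, fun hx => heK (hx ▸ h)⟩
    · rintro ⟨(h | h), hne⟩
      · exact Or.inl ⟨h, hne⟩
      · exact Or.inr h
  have heX : e ∈ C1 ∪ C2 ∪ K := Or.inl (Or.inl he1)
  have hfX : f ∈ C1 ∪ C2 ∪ K := Or.inl (Or.inl hfC1)
  have hgX : g ∈ C1 ∪ C2 ∪ K := Or.inl (Or.inr hgC2)
  have hBfin : B.Finite := hXfin.subset hB.subset
  -- cardinalities
  have h2X : 2 ≤ (C1 ∪ C2 ∪ K).ncard := by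
    have hsub : ({g, f} : Set α) ⊆ C1 ∪ C2 ∪ K := by
      rintro x (rfl | rfl)
      · exact hgX
      · exact hfX
    have := Set.ncard_le_ncard hsub hXfin
    rwa [Set.ncard_pair hgf] at this
  have hBcard : B.ncard ≤ (C1 ∪ C2 ∪ K).ncard - 2 := by
    have hBsub : B ⊆ ((C1 ∪ C2 ∪ K) \ {f}) \ {g} := by
      intro x hx
      refine ⟨⟨hB.subset hx, ?_⟩, ?_⟩
      · rintro rfl; exact hfB hx
      · rintro rfl; exact hgB hx
    have hle := Set.ncard_le_ncard hBsub hXfin.diff.diff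
    have hgmem : g ∈ (C1 ∪ C2 ∪ K) \ {f} := ⟨hgX, hgf⟩
    have e1 : (((C1 ∪ C2 ∪ K) \ {f}) \ {g}).ncard = ((C1 ∪ C2 ∪ K) \ {f}).ncard - 1 :=
      Set.ncard_diff_singleton_of_mem hgmem
    have e2 : ((C1 ∪ C2 ∪ K) \ {f}).ncard = (C1 ∪ C2 ∪ K).ncard - 1 :=
      Set.ncard_diff_singleton_of_mem hfX
    omega
  have hIcard : ((C1 ∪ C2 ∪ K) \ {e}).ncard = (C1 ∪ C2 ∪ K).ncard - 1 :=
    Set.ncard_diff_singleton_of_mem heX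
  have hlt : B.ncard < ((C1 ∪ C2 ∪ K) \ {e}).ncard := by omega
  have hIfin : ((C1 ∪ C2 ∪ K) \ {e}).Finite := hXfin.diff
  have hencard : B.encard < ((C1 ∪ C2 ∪ K) \ {e}).encard := by
    rw [← hBfin.cast_ncard_eq, ← hIfin.cast_ncard_eq]
    exact_mod_cast hlt
  rw [hIeq] at hI
  obtain ⟨x, hxI, hxind⟩ := hB.indep.augment hI hencard
  have hxX : insert x B ⊆ C1 ∪ C2 ∪ K := insert_subset hxI.1.1 hB.subset
  have := hB.eq_of_subset_indep hxind (subset_insert x B) hxX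
  exact hxI.2 (this ▸ mem_insert x B)

lemma kcircuit_step (hE : M.E.Finite) (hKE : K ⊆ M.E) {e : α} (heE : e ∈ M.E \ K)
    {D : Set α} (hD : KCircuit M (insert e K) D) :
    ∃ C, KCircuit M K C ∧ (C = D ∨ C = insert e D) := by
  have hDE : D ⊆ M.E \ K := hD.1.trans (diff_subset_diff_right (subset_insert e K))
  have hX : insert e D ⊆ M.E \ K := insert_subset heE hDE
  have hdep : M.Dep (insert e D ∪ K) := by
    have h := hD.2.1
    rwa [show D ∪ insert e K = insert e D ∪ K by
      ext x; simp only [mem_union, mem_insert_iff]; tauto] at h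
  obtain ⟨C, hCsub, hC⟩ := exists_kcircuit hKE (insert e D).ncard (insert e D) le_rfl
    (hE.subset (hX.trans diff_subset)) hX hdep
  by_cases heC : e ∈ C
  · have hsub : C \ {e} ⊆ D := by
      intro x hx
      rcases hCsub hx.1 with h | h
      · exact absurd h hx.2
      · exact h
    have hnss : ¬ (C \ {e} ⊂ D) := by
      intro hss
      have hind := hD.2.2 _ hss
      have heq2 : (C \ {e}) ∪ insert e K = C ∪ K := by
        ext x
        simp only [mem_union, mem_diff, mem_insert_iff, mem_singleton_iff]
        constructor
        · rintro (⟨h, _⟩ | (rfl | h))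
          · exact Or.inl h
          · exact Or.inl heC
          · exact Or.inr h
        · rintro (h | h)
          · by_cases hxe : x = e
            · exact Or.inr (Or.inl hxe)
            · exact Or.inl ⟨h, hxe⟩
          · exact Or.inr (Or.inr h)
      rw [heq2] at hind
      exact hC.2.1.not_indep hind
    have heq : C \ {e} = D := by
      by_contra hne
      exact hnss (hsub.ssubset_of_ne hne)
    refine ⟨C, hC, Or.inr ?_⟩
    rw [← heq, Set.insert_diff_singleton, Set.insert_eq_self.mpr heC]
  · have hsub : C ⊆ D := fun x hx =>
      (hCsub hx).resolve_left (by rintro rfl; exact heC hx)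
    have heq : C = D := by
      by_contra hne
      have hind := hD.2.2 C (hsub.ssubset_of_ne hne)
      exact hC.2.1.not_indep (hind.subset
        (union_subset_union_right C (subset_insert e K)))
    exact ⟨C, hC, Or.inl heq⟩

lemma kcircuit_pairing (hE : M.E.Finite) (hKE : K ⊆ M.E) (hK : M.Indep K)
    {e : α} (heE : e ∈ M.E \ K) :
    ∀ d (𝒟' : Finset (Set α)), (∀ D ∈ 𝒟', KCircuit M (insert e K) D) →
      (∀ D1 ∈ 𝒟', ∀ D2 ∈ 𝒟', D1 ≠ D2 → Disjoint D1 D2) → 2 * d ≤ 𝒟'.card →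
      ∃ 𝒟 : Finset (Set α), 𝒟.card = d ∧ (∀ C ∈ 𝒟, KCircuit M K C) ∧
        (∀ C1 ∈ 𝒟, ∀ C2 ∈ 𝒟, C1 ≠ C2 → Disjoint C1 C2) ∧ ∀ C ∈ 𝒟, C ⊆ ⋃₀ ↑𝒟' := by
  classical
  intro d
  induction d with
  | zero => intro 𝒟' _ _ _; exact ⟨∅, by simp⟩
  | succ d IH =>
    intro 𝒟' hmem hdisj hcard
    have h1lt : 1 < 𝒟'.card := by omega
    obtain ⟨D1, hD1, D2, hD2, hne12⟩ := Finset.one_lt_card.mp h1lt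
    have heD1 : e ∉ D1 := fun hh => ((hmem D1 hD1).1 hh).2 (mem_insert e K)
    have heD2 : e ∉ D2 := fun hh => ((hmem D2 hD2).1 hh).2 (mem_insert e K)
    obtain ⟨C1, hC1, hor1⟩ := kcircuit_step hE hKE heE (hmem D1 hD1)
    obtain ⟨C2, hC2, hor2⟩ := kcircuit_step hE hKE heE (hmem D2 hD2)
    have hD12E : D1 ∪ D2 ⊆ M.E \ K :=
      union_subset ((hmem D1 hD1).1.trans (diff_subset_diff_right (subset_insert e K)))
        ((hmem D2 hD2).1.trans (diff_subset_diff_right (subset_insert e K)))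
    have hCstar : ∃ Cs, KCircuit M K Cs ∧ Cs ⊆ D1 ∪ D2 := by
      rcases hor1 with h1 | h1
      · exact ⟨C1, hC1, h1 ▸ subset_union_left⟩
      rcases hor2 with h2 | h2
      · exact ⟨C2, hC2, h2 ▸ subset_union_right⟩
      have hCne : C1 ≠ C2 := by
        rw [h1, h2]
        intro h
        apply hne12
        have e1 : D1 = insert e D1 \ {e} := by simp [heD1]
        have e2 : D2 = insert e D2 \ {e} := by simp [heD2]
        rw [e1, e2, h]
      have hdep := kcircuit_elimination hE hKE hC1 hC2 hCne
        (e := e) (h1 ▸ mem_insert e D1) (h2 ▸ mem_insert e D2)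
      have heqU : (C1 ∪ C2) \ {e} = D1 ∪ D2 := by
        rw [h1, h2]
        ext x
        simp only [mem_diff, mem_union, mem_insert_iff, mem_singleton_iff]
        constructor
        · rintro ⟨(rfl | h) | (rfl | h), hne⟩
          · exact absurd rfl hne
          · exact Or.inl h
          · exact absurd rfl hne
          · exact Or.inr h
        · rintro (h | h)
          · exact ⟨Or.inl (Or.inr h), fun hx => heD1 (hx ▸ h)⟩
          · exact ⟨Or.inr (Or.inr h), fun hx => heD2 (hx ▸ h)⟩
      rw [heqU] at hdep
      obtain ⟨Cs, hsub, hCs⟩ := exists_kcircuit hKE (D1 ∪ D2).ncard (D1 ∪ D2) le_rfl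
        (hE.subset (hD12E.trans diff_subset)) hD12E hdep
      exact ⟨Cs, hCs, hsub⟩
    obtain ⟨Cs, hCs, hCssub⟩ := hCstar
    set 𝒟'' := (𝒟'.erase D1).erase D2 with h𝒟''
    have hD2' : D2 ∈ 𝒟'.erase D1 := Finset.mem_erase.mpr ⟨hne12.symm, hD2⟩
    have hcard'' : 2 * d ≤ 𝒟''.card := by
      rw [h𝒟'', Finset.card_erase_of_mem hD2', Finset.card_erase_of_mem hD1]
      omega
    have hsub'' : 𝒟'' ⊆ 𝒟' := (Finset.erase_subset _ _).trans (Finset.erase_subset _ _)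
    obtain ⟨𝒟, hc, hm, hd, hu⟩ := IH 𝒟'' (fun D hD => hmem D (hsub'' hD))
      (fun a ha b hb hab => hdisj a (hsub'' ha) b (hsub'' hb) hab) hcard''
    have hdisjCs : ∀ C ∈ 𝒟, Disjoint Cs C := by
      intro C hC
      have hCsub : C ⊆ ⋃₀ ↑𝒟'' := hu C hC
      have hdisjU : Disjoint (D1 ∪ D2) (⋃₀ ↑𝒟'') := by
        rw [Set.disjoint_sUnion_right]
        intro t ht
        have ht' : t ∈ 𝒟'' := ht
        have htD1 : t ≠ D1 := Finset.ne_of_mem_erase (Finset.mem_of_mem_erase ht')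
        have htD2 : t ≠ D2 := Finset.ne_of_mem_erase ht'
        exact Set.disjoint_union_left.mpr
          ⟨hdisj D1 hD1 t (hsub'' ht') (Ne.symm htD1),
           hdisj D2 hD2 t (hsub'' ht') (Ne.symm htD2)⟩
      exact (hdisjU.mono hCssub hCsub)
    have hCsne : Cs.Nonempty := hCs.nonempty' hK
    have hCsnotmem : Cs ∉ 𝒟 := by
      intro h
      have := hdisjCs Cs h
      rw [disjoint_self] at this
      exact hCsne.ne_empty this
    refine ⟨insert Cs 𝒟, ?_, ?_, ?_, ?_⟩
    · rw [Finset.card_insert_of_notMem hCsnotmem, hc]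
    · intro C hC
      rcases Finset.mem_insert.mp hC with rfl | hC
      · exact hCs
      · exact hm C hC
    · intro A hA B hB hAB
      rcases Finset.mem_insert.mp hA with hA' | hA' <;>
        rcases Finset.mem_insert.mp hB with hB' | hB'
      · exact absurd (hA'.trans hB'.symm) hAB
      · exact hA' ▸ hdisjCs B hB'
      · exact hB' ▸ (hdisjCs A hA').symm
      · exact hd A hA' B hB' hAB
    · intro C hC
      rcases Finset.mem_insert.mp hC with rfl | hC
      · exact hCssub.trans (union_subset
          (Set.subset_sUnion_of_mem (by exact_mod_cast hD1))
          (Set.subset_sUnion_of_mem (by exact_mod_cast hD2)))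
      · exact (hu C hC).trans (Set.sUnion_subset_sUnion (by exact_mod_cast hsub''))

lemma greedy (hE : M.E.Finite) (hK : M.Indep K) (s t : ℕ) :
    ∀ d (F : Finset (Set α)), (∀ C ∈ F, KCircuit M K C) → (∀ C ∈ F, C.ncard ≤ s) →
      (∀ x : α, (F.filter (fun C => x ∈ C)).card ≤ t) → d * (s * t) < F.card →
      ∃ 𝒟 : Finset (Set α), 𝒟 ⊆ F ∧ 𝒟.card = d ∧
        ∀ C1 ∈ 𝒟, ∀ C2 ∈ 𝒟, C1 ≠ C2 → Disjoint C1 C2 := by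
  classical
  intro d
  induction d with
  | zero => intro F _ _ _ _; exact ⟨∅, by simp⟩
  | succ d IH =>
    intro F hmem hsz hthr hcard
    have hFpos : 0 < F.card := by omega
    obtain ⟨C0, hC0⟩ := Finset.card_pos.mp hFpos
    have hC0fin : C0.Finite := hE.subset ((hmem C0 hC0).1.trans diff_subset)
    have hC0ne : C0.Nonempty := (hmem C0 hC0).nonempty' hK
    set Fmeet := F.filter (fun C => ¬ Disjoint C0 C) with hFmeet
    have hFmeetsub : Fmeet ⊆ hC0fin.toFinset.biUnion (fun x => F.filter (fun C => x ∈ C)) := by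
      intro C hC
      rw [hFmeet, Finset.mem_filter] at hC
      obtain ⟨x, hx1, hx2⟩ := Set.not_disjoint_iff.mp hC.2
      exact Finset.mem_biUnion.mpr ⟨x, hC0fin.mem_toFinset.mpr hx1,
        Finset.mem_filter.mpr ⟨hC.1, hx2⟩⟩
    have hFmeetcard : Fmeet.card ≤ s * t := by
      calc Fmeet.card ≤ (hC0fin.toFinset.biUnion (fun x => F.filter (fun C => x ∈ C))).card :=
            Finset.card_le_card hFmeetsub
        _ ≤ ∑ x ∈ hC0fin.toFinset, (F.filter (fun C => x ∈ C)).card :=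
            Finset.card_biUnion_le
        _ ≤ hC0fin.toFinset.card * t := by
            rw [← smul_eq_mul]
            exact Finset.sum_le_card_nsmul _ _ t (fun x _ => hthr x)
        _ ≤ s * t := by
            apply Nat.mul_le_mul_right
            rw [← Set.ncard_eq_toFinset_card C0 hC0fin]
            exact hsz C0 hC0
    set F' := F.filter (fun C => Disjoint C0 C) with hF'
    have hsplit : F'.card + Fmeet.card = F.card := by
      rw [hF', hFmeet]
      exact Finset.card_filter_add_card_filter_not _
    have hcard' : d * (s * t) < F'.card := by
      have : (d + 1) * (s * t) = d * (s * t) + s * t := by ring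
      omega
    obtain ⟨𝒟, hsub, hc, hd⟩ := IH F' (fun C hC => hmem C (Finset.filter_subset _ _ hC))
      (fun C hC => hsz C (Finset.filter_subset _ _ hC))
      (fun x => le_trans (Finset.card_le_card
        (Finset.filter_subset_filter _ (Finset.filter_subset _ _))) (hthr x)) hcard'
    have hdisjC0 : ∀ C ∈ 𝒟, Disjoint C0 C := by
      intro C hC
      exact (Finset.mem_filter.mp (hsub hC)).2
    have hC0notmem : C0 ∉ 𝒟 := by
      intro h
      have := hdisjC0 C0 h
      rw [disjoint_self] at this
      exact hC0ne.ne_empty this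
    refine ⟨insert C0 𝒟, ?_, ?_, ?_⟩
    · exact Finset.insert_subset hC0 (hsub.trans (Finset.filter_subset _ _))
    · rw [Finset.card_insert_of_notMem hC0notmem, hc]
    · intro A hA B hB hAB
      rcases Finset.mem_insert.mp hA with hA' | hA' <;>
        rcases Finset.mem_insert.mp hB with hB' | hB'
      · exact absurd (hA'.trans hB'.symm) hAB
      · exact hA' ▸ hdisjC0 B hB'
      · exact hB' ▸ (hdisjC0 A hA').symm
      · exact hd A hA' B hB' hAB

lemma lemB (hE : M.E.Finite) (hKE : K ⊆ M.E) (hK : M.Indep K) (ℓ d : ℕ)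
    (hA : ∀ e' : α, e' ∈ M.E \ K → M.Indep (insert e' K) → ∀ F' : Finset (Set α),
      (∀ D ∈ F', KCircuit M (insert e' K) D) → (∀ D ∈ F', D.ncard ≤ ℓ) →
      Gfun ℓ (2 * d) ≤ F'.card →
      ∃ 𝒟' : Finset (Set α), 𝒟'.card = 2 * d ∧ (∀ D ∈ 𝒟', KCircuit M (insert e' K) D) ∧
        ∀ D1 ∈ 𝒟', ∀ D2 ∈ 𝒟', D1 ≠ D2 → Disjoint D1 D2) :
    ∀ j (T : Set α) (e : α), e ∈ T → T ⊆ M.E \ K → ∀ F : Finset (Set α),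
      (∀ C ∈ F, KCircuit M K C) → (∀ C ∈ F, T ⊆ C) → (∀ C ∈ F, C.ncard ≤ ℓ + 1) →
      (∀ C ∈ F, C.ncard ≤ T.ncard + j) → Hb (Gfun ℓ (2 * d)) j ≤ F.card →
      ∃ 𝒟 : Finset (Set α), 𝒟.card = d ∧ (∀ C ∈ 𝒟, KCircuit M K C) ∧
        ∀ C1 ∈ 𝒟, ∀ C2 ∈ 𝒟, C1 ≠ C2 → Disjoint C1 C2 := by
  classical
  intro j
  induction j with
  | zero =>
    intro T e heT hTE F hmem hT hsz hslack hcard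
    exfalso
    have h2 : 2 ≤ F.card := hcard
    have h1lt : 1 < F.card := by omega
    obtain ⟨C1, h1, C2, h2', hne⟩ := Finset.one_lt_card.mp h1lt
    have hfin1 : C1.Finite := hE.subset ((hmem C1 h1).1.trans diff_subset)
    have hfin2 : C2.Finite := hE.subset ((hmem C2 h2').1.trans diff_subset)
    have e1 : T = C1 := Set.eq_of_subset_of_ncard_le (hT C1 h1)
      (by simpa using hslack C1 h1) hfin1
    have e2 : T = C2 := Set.eq_of_subset_of_ncard_le (hT C2 h2')
      (by simpa using hslack C2 h2') hfin2
    exact hne (e1 ▸ e2)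
  | succ j IH =>
    intro T e heT hTE F hmem hT hsz hslack hcard
    have hq1 : 1 ≤ Gfun ℓ (2 * d) := Gfun_pos _ _
    have hHb1 : 1 ≤ Hb (Gfun ℓ (2 * d)) j := Hb_pos _ _
    have hHbsucc : Hb (Gfun ℓ (2 * d)) (j + 1) = Hb (Gfun ℓ (2 * d)) j * Gfun ℓ (2 * d) + 1 :=
      rfl
    have h2F : 2 ≤ F.card := by
      have h1 : 1 ≤ Hb (Gfun ℓ (2 * d)) j * Gfun ℓ (2 * d) := Nat.one_le_iff_ne_zero.mpr
        (by positivity)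
      omega
    have h1lt : 1 < F.card := by omega
    obtain ⟨Ca, hCa, Cb, hCb, hab⟩ := Finset.one_lt_card.mp h1lt
    have hsingle : ∀ C ∈ F, {e} ⊂ C := by
      intro C hC
      refine (Set.singleton_subset_iff.mpr (hT C hC heT)).ssubset_of_ne ?_
      intro h
      set C' := if C = Ca then Cb else Ca with hC'def
      have hC'F : C' ∈ F := by
        rw [hC'def]; split <;> assumption
      have hC'ne : C' ≠ C := by
        rw [hC'def]; split
        · rename_i hh; rw [hh]; exact hab.symm
        · rename_i hh; exact fun hc => hh hc.symm
      have heC' : ({e} : Set α) ⊆ C' := Set.singleton_subset_iff.mpr (hT C' hC'F heT)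
      have hss : ({e} : Set α) ⊂ C' := heC'.ssubset_of_ne (fun hc => hC'ne (hc ▸ h))
      have hind := (hmem C' hC'F).2.2 {e} hss
      rw [h] at hind
      exact (hmem C hC).2.1.not_indep hind
    have hK' : M.Indep (insert e K) := by
      have h := (hmem Ca hCa).2.2 {e} (hsingle Ca hCa)
      rwa [Set.singleton_union] at h
    have heEK : e ∈ M.E \ K := hTE heT
    have hex : ∀ C ∈ F, ∃ D, D ⊆ C \ {e} ∧ KCircuit M (insert e K) D := by
      intro C hC
      have hCE : C ⊆ M.E \ K := (hmem C hC).1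
      have heC : e ∈ C := hT C hC heT
      have hXE : C \ {e} ⊆ M.E \ insert e K := by
        intro x hx
        exact ⟨(hCE hx.1).1, by
          rintro (rfl | hxK)
          · exact hx.2 rfl
          · exact (hCE hx.1).2 hxK⟩
      have hdep : M.Dep ((C \ {e}) ∪ insert e K) := by
        have heq : (C \ {e}) ∪ insert e K = C ∪ K := by
          ext x
          simp only [mem_union, mem_diff, mem_insert_iff, mem_singleton_iff]
          constructor
          · rintro (⟨h, _⟩ | (rfl | h))
            · exact Or.inl h
            · exact Or.inl heC
            · exact Or.inr h
          · rintro (h | h)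
            · by_cases hxe : x = e
              · exact Or.inr (Or.inl hxe)
              · exact Or.inl ⟨h, hxe⟩
            · exact Or.inr (Or.inr h)
        rw [heq]
        exact (hmem C hC).2.1
      exact exists_kcircuit (insert_subset heEK.1 hKE) (C \ {e}).ncard _ le_rfl
        (hE.subset (hXE.trans diff_subset)) hXE hdep
    set f : Set α → Set α := fun C =>
      if h : ∃ D, D ⊆ C \ {e} ∧ KCircuit M (insert e K) D then h.choose else ∅ with hf
    have hfspec : ∀ C ∈ F, f C ⊆ C \ {e} ∧ KCircuit M (insert e K) (f C) := by
      intro C hC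
      have h := hex C hC
      simp only [hf, dif_pos h]
      exact h.choose_spec
    set I := F.image f with hI
    have hIsize : ∀ D ∈ I, D.ncard ≤ ℓ := by
      intro D hD
      obtain ⟨C, hCF, rfl⟩ := Finset.mem_image.mp hD
      have hCfin : C.Finite := hE.subset ((hmem C hCF).1.trans diff_subset)
      have hsub := (hfspec C hCF).1
      have h1 : (f C).ncard ≤ (C \ {e}).ncard :=
        Set.ncard_le_ncard hsub hCfin.diff
      have h2 : (C \ {e}).ncard = C.ncard - 1 :=
        Set.ncard_diff_singleton_of_mem (hT C hCF heT)
      have h3 := hsz C hCF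
      omega
    by_cases hIcard : Gfun ℓ (2 * d) ≤ I.card
    · obtain ⟨𝒟', hcard', hmem', hdisj'⟩ := hA e heEK hK' I
        (fun D hD => by
          obtain ⟨C, hCF, rfl⟩ := Finset.mem_image.mp hD
          exact (hfspec C hCF).2) hIsize hIcard
      obtain ⟨𝒟, h1, h2, h3, _⟩ := kcircuit_pairing hE hKE hK heEK d 𝒟' hmem' hdisj'
        (le_of_eq hcard'.symm)
      exact ⟨𝒟, h1, h2, h3⟩
    · push_neg at hIcard
      have hfiber : ∃ D ∈ I, Hb (Gfun ℓ (2 * d)) j ≤ (F.filter (fun C => f C = D)).card := by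
        by_contra hcon
        push_neg at hcon
        have hb := Finset.card_le_mul_card_image F (Hb (Gfun ℓ (2 * d)) j - 1)
          (fun a ha => by have := hcon a ha; omega)
        have h1 : (Hb (Gfun ℓ (2 * d)) j - 1) * I.card ≤
            (Hb (Gfun ℓ (2 * d)) j - 1) * (Gfun ℓ (2 * d) - 1) :=
          Nat.mul_le_mul_left _ (by omega)
        have h2 : (Hb (Gfun ℓ (2 * d)) j - 1) * (Gfun ℓ (2 * d) - 1) ≤
            Hb (Gfun ℓ (2 * d)) j * Gfun ℓ (2 * d) :=
          Nat.mul_le_mul (Nat.sub_le _ _) (Nat.sub_le _ _)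
        rw [← hI] at hb
        omega
      obtain ⟨D, hDI, hfib⟩ := hfiber
      obtain ⟨C0, hC0F, hfC0⟩ := Finset.mem_image.mp hDI
      have hDcirc : KCircuit M (insert e K) D := hfC0 ▸ (hfspec C0 hC0F).2
      have hDE : D ⊆ M.E \ K := hDcirc.1.trans (diff_subset_diff_right (subset_insert e K))
      have hDT : ¬ D ⊆ T := by
        intro hsubT
        obtain ⟨C', hC', hor⟩ := kcircuit_step hE hKE heEK hDcirc
        have hC'T : C' ⊆ T := by
          rcases hor with rfl | rfl
          · exact hsubT
          · exact insert_subset heT hsubT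
        have hCeq : ∀ C ∈ F, C' = C := by
          intro C hC
          have hsub : C' ⊆ C := hC'T.trans (hT C hC)
          by_contra hne
          exact ((hmem C hC).2.2 C' (hsub.ssubset_of_ne hne)).not_dep hC'.2.1
        exact hab ((hCeq Ca hCa) ▸ (hCeq Cb hCb))
      set T' := T ∪ D with hT'
      have hTT' : T ⊂ T' := by
        refine subset_union_left.ssubset_of_ne ?_
        intro h
        exact hDT (by rw [h]; exact subset_union_right)
      have hT'fin : T'.Finite := hE.subset ((union_subset hTE hDE).trans diff_subset)
      have hT'card : T.ncard + 1 ≤ T'.ncard := Set.ncard_lt_ncard hTT' hT'fin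
      refine IH T' e (mem_union_left D heT) (union_subset hTE hDE)
        (F.filter (fun C => f C = D)) ?_ ?_ ?_ ?_ hfib
      · exact fun C hC => hmem C (Finset.filter_subset _ _ hC)
      · intro C hC
        obtain ⟨hCF, hfCD⟩ := Finset.mem_filter.mp hC
        refine union_subset (hT C hCF) ?_
        rw [← hfCD]
        exact ((hfspec C hCF).1.trans diff_subset)
      · exact fun C hC => hsz C (Finset.filter_subset _ _ hC)
      · intro C hC
        have := hslack C (Finset.filter_subset _ _ hC)
        omega

lemma lemA (hE : M.E.Finite) :
    ∀ ℓ d (K : Set α), K ⊆ M.E → M.Indep K → ∀ F : Finset (Set α),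
      (∀ C ∈ F, KCircuit M K C) → (∀ C ∈ F, C.ncard ≤ ℓ) → Gfun ℓ d ≤ F.card →
      ∃ 𝒟 : Finset (Set α), 𝒟.card = d ∧ (∀ C ∈ 𝒟, KCircuit M K C) ∧
        ∀ C1 ∈ 𝒟, ∀ C2 ∈ 𝒟, C1 ≠ C2 → Disjoint C1 C2 := by
  classical
  intro ℓ
  induction ℓ with
  | zero =>
    intro d K hKE hK F hmem hsz hcard
    exfalso
    have h1 : 1 ≤ F.card := hcard
    have hpos : 0 < F.card := by omega
    obtain ⟨C, hC⟩ := Finset.card_pos.mp hpos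
    have hCfin : C.Finite := hE.subset ((hmem C hC).1.trans diff_subset)
    have hne : C.Nonempty := (hmem C hC).nonempty' hK
    have : C.ncard = 0 := Nat.le_zero.mp (hsz C hC)
    rw [Set.ncard_eq_zero hCfin] at this
    exact hne.ne_empty this
  | succ ℓ IH =>
    intro d K hKE hK F hmem hsz hcard
    set q := Gfun ℓ (2 * d) with hq
    set thr := Hb q ℓ with hthr
    have hthr1 : 1 ≤ thr := Hb_pos _ _
    have hGsucc : Gfun (ℓ + 1) d = d * ((ℓ + 1) * thr) + 1 := rfl
    by_cases hx : ∃ x : α, thr ≤ (F.filter (fun C => x ∈ C)).card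
    · obtain ⟨x, hxc⟩ := hx
      have hpos : 0 < (F.filter (fun C => x ∈ C)).card := lt_of_lt_of_le (by omega) hxc
      obtain ⟨C0, hC0⟩ := Finset.card_pos.mp hpos
      have hC0F : C0 ∈ F := (Finset.mem_filter.mp hC0).1
      have hxC0 : x ∈ C0 := (Finset.mem_filter.mp hC0).2
      have hxE : x ∈ M.E \ K := (hmem C0 hC0F).1 hxC0
      refine lemB hE hKE hK ℓ d ?_ ℓ {x} x rfl (Set.singleton_subset_iff.mpr hxE)
        (F.filter (fun C => x ∈ C)) ?_ ?_ ?_ ?_ ?_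
      · intro e' he' hK' F' h1 h2 h3
        exact IH (2 * d) (insert e' K) (insert_subset he'.1 hKE) hK' F' h1 h2 h3
      · exact fun C hC => hmem C (Finset.filter_subset _ _ hC)
      · exact fun C hC => Set.singleton_subset_iff.mpr (Finset.mem_filter.mp hC).2
      · exact fun C hC => hsz C (Finset.filter_subset _ _ hC)
      · intro C hC
        have h1 := hsz C (Finset.filter_subset _ _ hC)
        have h2 : ({x} : Set α).ncard = 1 := Set.ncard_singleton x
        omega
      · exact hxc
    · push_neg at hx
      have harith : d * ((ℓ + 1) * (thr - 1)) < F.card := by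
        have h1 : (ℓ + 1) * (thr - 1) ≤ (ℓ + 1) * thr :=
          Nat.mul_le_mul_left _ (Nat.sub_le _ _)
        have h2 : d * ((ℓ + 1) * (thr - 1)) ≤ d * ((ℓ + 1) * thr) :=
          Nat.mul_le_mul_left _ h1
        omega
      obtain ⟨𝒟, hsub, hc, hd⟩ := greedy hE hK (ℓ + 1) (thr - 1) d F hmem hsz
        (fun x => by have := hx x; omega) harith
      exact ⟨𝒟, hc, fun C hC => hmem C (hsub hC), hd⟩

end Matroid

theorem statement3 :
    ∃ g : ℕ × ℕ → ℕ, ∀ ℓ d : ℕ, 0 < ℓ → 0 < d →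
      ∀ {α : Type u} (M : Matroid α), M.E.Finite →
        g (ℓ, d) ≤ {C | IsCircuit M C ∧ C.ncard = ℓ}.ncard →
        ∃ 𝒟 : Finset (Set α), 𝒟.card = d ∧ (∀ C ∈ 𝒟, IsCircuit M C) ∧
          ∀ C ∈ 𝒟, ∀ C' ∈ 𝒟, C ≠ C' → Disjoint C C' := by
  classical
  refine ⟨fun p => Gfun p.1 p.2, ?_⟩
  intro ℓ d _ _ α M hE hcard
  have hfin : {C | IsCircuit M C ∧ C.ncard = ℓ}.Finite :=
    hE.finite_subsets.subset (fun C hC => hC.1.1.subset_ground)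
  set F := hfin.toFinset with hF
  have hFcard : Gfun ℓ d ≤ F.card := by
    rw [hF, ← Set.ncard_eq_toFinset_card _ hfin]
    exact hcard
  obtain ⟨𝒟, hc, hm, hd⟩ := lemA hE ℓ d ∅ (empty_subset _) M.empty_indep F
    (fun C hC => by
      have hC' := hfin.mem_toFinset.mp hC
      refine ⟨by rw [Set.diff_empty]; exact hC'.1.1.subset_ground, ?_, ?_⟩
      · rw [Set.union_empty]; exact hC'.1.1
      · intro D hD
        rw [Set.union_empty]
        exact Matroid.indep_of_not_dep (hC'.1.2 D hD)
          (hD.subset.trans hC'.1.1.subset_ground))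
    (fun C hC => le_of_eq (hfin.mem_toFinset.mp hC).2) hFcard
  refine ⟨𝒟, hc, fun C hC => ?_, hd⟩
  obtain ⟨hsub, hdep, hmin⟩ := hm C hC
  rw [Set.union_empty] at hdep
  refine ⟨hdep, fun D hD hDdep => ?_⟩
  have := hmin D hD
  rw [Set.union_empty] at this
  exact this.not_dep hDdep
end

section
/- For all positive integers t₁, ℓ₁, t₂, ℓ₂ such that ℓ₁ < 2t₁ or ℓ₂ < 2t₂, there exists an integer N (depending only on t₁, ℓ₁, t₂, ℓ₂) such that every finite matroid M with the (t₁,ℓ₁,t₂,ℓ₂)-property satisfies |E(M)| < N; in particular, there are only finitely many such matroids up to isomorphism. -/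
open Set

/-- A cocircuit of a matroid: a circuit of the dual. -/
def IsCocircuit {α : Type*} (M : Matroid α) (C : Set α) : Prop :=
  IsCircuit M✶ C

/-- `M` has the `(t₁,ℓ₁,t₂,ℓ₂)`-property: every `t₁`-element subset of the ground set is
contained in an `ℓ₁`-element circuit, and every `t₂`-element subset is contained in an
`ℓ₂`-element cocircuit. -/
def HasQuadProperty {α : Type*} (M : Matroid α) (t₁ ℓ₁ t₂ ℓ₂ : ℕ) : Prop :=
  (∀ X ⊆ M.E, X.ncard = t₁ → ∃ C, IsCircuit M C ∧ C.ncard = ℓ₁ ∧ X ⊆ C) ∧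
  (∀ X ⊆ M.E, X.ncard = t₂ → ∃ C, IsCocircuit M C ∧ C.ncard = ℓ₂ ∧ X ⊆ C)

universe u

namespace QuadAux

variable {α : Type*} {M : Matroid α} {C Y B V : Set α}

lemma csub (h : IsCircuit M C) : C ⊆ M.E := h.1.subset_ground

lemma cindep (h : IsCircuit M C) {y : α} (hy : y ∈ C) :
    M.Indep (C \ {y}) := by
  have hnd : ¬ M.Dep (C \ {y}) := h.2 _ (Set.sdiff_singleton_ssubset.2 hy)
  have hsub : C \ {y} ⊆ M.E := diff_subset.trans (csub h)
  rw [Matroid.dep_iff] at hnd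
  push_neg at hnd
  by_contra hni
  exact (hnd hni) hsub

lemma cclosure (h : IsCircuit M C) {y : α} (hy : y ∈ C) :
    y ∈ M.closure (C \ {y}) := by
  have hI := cindep h hy
  rw [hI.mem_closure_iff]
  left
  rw [insert_diff_singleton, insert_eq_of_mem hy]
  exact h.1

/-- union of a list of sets -/
def lU : List (Set α) → Set α := fun l => l.foldr (· ∪ ·) ∅

@[simp] lemma lU_nil : lU ([] : List (Set α)) = ∅ := rfl
@[simp] lemma lU_cons (C : Set α) (l : List (Set α)) : lU (C :: l) = C ∪ lU l := rfl

lemma subset_lU {l : List (Set α)} {C : Set α} (h : C ∈ l) : C ⊆ lU l := by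
  induction l with
  | nil => simp at h
  | cons D l ih =>
    rcases List.mem_cons.1 h with h | h
    · subst h; simp [lU_cons, subset_union_left]
    · exact (ih h).trans (subset_union_right)

lemma lU_subset {l : List (Set α)} {V : Set α} (h : ∀ C ∈ l, C ⊆ V) : lU l ⊆ V := by
  induction l with
  | nil => simp
  | cons D l ih =>
    simp only [lU_cons, union_subset_iff]
    exact ⟨h D (by simp), ih fun C hC => h C (List.mem_cons_of_mem _ hC)⟩

lemma lU_finite {l : List (Set α)} (h : ∀ C ∈ l, C.Finite) : (lU l).Finite := by
  induction l with
  | nil => simp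
  | cons D l ih =>
    simp only [lU_cons]
    exact (h D (by simp)).union (ih fun C hC => h C (List.mem_cons_of_mem _ hC))

/-- Greedy core lemma: the union `U` of a list of circuits, each of size at most `ℓ`, has a
subset `Y` with `U ⊆ cl (U \ Y)` and `|U| ≤ |Y| * ℓ`. -/
lemma core (M : Matroid α) (ℓ : ℕ) :
    ∀ l : List (Set α), (∀ C ∈ l, IsCircuit M C ∧ C.Finite ∧ C.ncard ≤ ℓ) →
    ∃ Y : Set α, Y ⊆ lU l ∧ (lU l) ⊆ M.closure (lU l \ Y) ∧ (lU l).ncard ≤ Y.ncard * ℓ := by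
  intro l
  induction l with
  | nil => exact fun _ => ⟨∅, by simp⟩
  | cons C l ih =>
    intro h
    have hC := h C (by simp)
    have hl := fun D hD => h D (List.mem_cons_of_mem _ hD)
    obtain ⟨Y', hY'U, hY'cl, hY'card⟩ := ih hl
    have hUfin : (lU l).Finite := lU_finite fun D hD => (hl D hD).2.1
    have hUE : lU l ⊆ M.E := lU_subset fun D hD => csub (hl D hD).1
    by_cases hCU : C ⊆ lU l
    · refine ⟨Y', ?_, ?_, ?_⟩ <;>
        rw [lU_cons, union_eq_self_of_subset_left hCU] <;> assumption
    · obtain ⟨y, hyC, hyU⟩ := not_subset.mp hCU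
      have hyY' : y ∉ Y' := fun hy => hyU (hY'U hy)
      set A : Set α := (C ∪ lU l) \ insert y Y' with hA
      have hAE : A ⊆ M.E := diff_subset.trans (union_subset (csub hC.1) hUE)
      have h1 : lU l \ Y' ⊆ A := by
        intro x hx
        refine ⟨Or.inr hx.1, ?_⟩
        rintro (rfl | hxY')
        · exact hyU hx.1
        · exact hx.2 hxY'
      have hUclA : lU l ⊆ M.closure A :=
        hY'cl.trans (M.closure_subset_closure h1)
      have h2 : C \ {y} ⊆ M.closure A := by
        intro x hx
        by_cases hxY : x ∈ insert y Y'
        · rcases hxY with rfl | hxY'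
          · exact absurd rfl hx.2
          · exact hUclA (hY'U hxY')
        · exact M.subset_closure A hAE ⟨Or.inl hx.1, hxY⟩
      have h3 : y ∈ M.closure A := by
        have := cclosure hC.1 hyC
        exact Matroid.closure_subset_closure_of_subset_closure h2 this
      refine ⟨insert y Y', ?_, ?_, ?_⟩
      · rw [lU_cons]
        exact insert_subset (Or.inl hyC) (hY'U.trans subset_union_right)
      · rw [lU_cons]
        rintro x (hxC | hxU)
        · rcases eq_or_ne x y with rfl | hxy
          · exact h3
          · exact h2 ⟨hxC, hxy⟩
        · exact hUclA hxU
      · rw [lU_cons]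
        calc (C ∪ lU l).ncard ≤ C.ncard + (lU l).ncard := Set.ncard_union_le _ _
          _ ≤ ℓ + Y'.ncard * ℓ := Nat.add_le_add hC.2.2 hY'card
          _ = (Y'.ncard + 1) * ℓ := by ring
          _ = (insert y Y').ncard * ℓ := by
              rw [Set.ncard_insert_of_notMem hyY' (hUfin.subset hY'U)]

/-- If `V ⊆ cl (V \ Y)` with `B ⊆ V` a base, then `|B| + |Y| ≤ |V|`. -/
lemma card_bound_of_spanning (hE : M.E.Finite) (hV : V ⊆ M.E) (hYV : Y ⊆ V)
    (hsp : V ⊆ M.closure (V \ Y)) (hB : M.IsBase B) (hBV : B ⊆ V) :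
    B.ncard + Y.ncard ≤ V.ncard := by
  have hVfin : V.Finite := hE.subset hV
  have hspan : M.Spanning (V \ Y) := by
    rw [Matroid.spanning_iff_closure_eq (diff_subset.trans hV)]
    refine subset_antisymm (M.closure_subset_ground _) ?_
    calc M.E = M.closure B := hB.closure_eq.symm
      _ ⊆ M.closure (V \ Y) :=
          Matroid.closure_subset_closure_of_subset_closure (hBV.trans hsp)
  obtain ⟨B', hB', hB'sub⟩ := hspan.exists_isBase_subset
  have h1 : B'.ncard = B.ncard := hB'.ncard_eq_ncard_of_isBase hB
  have h2 : B'.ncard ≤ (V \ Y).ncard := Set.ncard_le_ncard hB'sub hVfin.diff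
  have h3 : (V \ Y).ncard = V.ncard - Y.ncard := Set.ncard_diff hYV (hVfin.subset hYV)
  have h4 : Y.ncard ≤ V.ncard := Set.ncard_le_ncard hYV hVfin
  omega

/-- Covering the ground set by small cocircuits bounds `|E| ≤ |B| ℓ₂`. -/
lemma ground_card_le (M : Matroid α) (hE : M.E.Finite) (ℓ₂ : ℕ)
    (hcov : ∀ e ∈ M.E, ∃ C, IsCircuit M✶ C ∧ C.ncard ≤ ℓ₂ ∧ e ∈ C)
    {B : Set α} (hB : M.IsBase B) : M.E.ncard ≤ B.ncard * ℓ₂ := by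
  classical
  have hBE : B ⊆ M.E := hB.subset_ground
  set g : α → Set α := fun e =>
    if h : e ∈ M.E then (hcov e h).choose else ∅ with hg
  have hgspec : ∀ e ∈ M.E, IsCircuit M✶ (g e) ∧ (g e).ncard ≤ ℓ₂ ∧ e ∈ g e := by
    intro e he
    simp only [hg, dif_pos he]
    exact (hcov e he).choose_spec
  set l : List (Set α) := (hE.toFinset.toList).map g with hldef
  have hmem : ∀ C ∈ l, IsCircuit M✶ C ∧ C.Finite ∧ C.ncard ≤ ℓ₂ := by
    intro C hC
    obtain ⟨e, he, rfl⟩ := List.mem_map.1 hC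
    have heE : e ∈ M.E := by
      rw [← Set.Finite.mem_toFinset hE]
      exact (Finset.mem_toList).1 he
    obtain ⟨h1, h2, _⟩ := hgspec e heE
    have hsub' : g e ⊆ M✶.E := csub h1
    rw [Matroid.dual_ground] at hsub'
    exact ⟨h1, hE.subset hsub', h2⟩
  have hUE : lU l ⊆ M.E := lU_subset fun C hC => (csub (hmem C hC).1 : C ⊆ M✶.E)
  have hEU : M.E ⊆ lU l := by
    intro e he
    have : g e ∈ l := List.mem_map.2 ⟨e, (Finset.mem_toList).2 (hE.mem_toFinset.2 he), rfl⟩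
    exact subset_lU this (hgspec e he).2.2
  have hU : lU l = M.E := subset_antisymm hUE hEU
  obtain ⟨Y, hYU, hYcl, hYcard⟩ := core M✶ ℓ₂ l hmem
  rw [hU] at hYU hYcl hYcard
  have hbound := card_bound_of_spanning (M := M✶) (V := M.E) (Y := Y) (B := M.E \ B)
    (by rwa [Matroid.dual_ground]) (by rw [Matroid.dual_ground]) hYU hYcl
    (hB.compl_isBase_dual) diff_subset
  have hd : (M.E \ B).ncard = M.E.ncard - B.ncard := Set.ncard_diff hBE (hE.subset hBE)
  have hble : B.ncard ≤ M.E.ncard := Set.ncard_le_ncard hBE hE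
  have hYB : Y.ncard ≤ B.ncard := by omega
  calc M.E.ncard ≤ Y.ncard * ℓ₂ := hYcard
    _ ≤ B.ncard * ℓ₂ := Nat.mul_le_mul_right _ hYB




lemma main (t₁ ℓ₁ t₂ ℓ₂ : ℕ) (ht₂ : 0 < t₂) (hℓ₂ : 0 < ℓ₂) (hlt : ℓ₁ < 2 * t₁) :
    ∃ N : ℕ, ∀ {α : Type u} (M : Matroid α), M.E.Finite →
      HasQuadProperty M t₁ ℓ₁ t₂ ℓ₂ → M.E.ncard < N := by
  classical
  set k := ℓ₁ - t₁ with hk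
  set K := 2 ^ t₁ * Nat.factorial t₁ * 2 ^ ℓ₁ * 2 ^ (t₁ * ℓ₁) * t₁ * ℓ₂ ^ t₁ with hK
  refine ⟨K + 2 * t₁ * ℓ₂ + t₂ + 2, ?_⟩
  intro α M hE hQ
  by_contra hcon
  push_neg at hcon
  set n := M.E.ncard with hndef
  have hn1 : 1 ≤ n := by omega
  have hnt₂ : t₂ ≤ n := by omega
  -- every element lies in an ℓ₂-cocircuit
  have hcov : ∀ e ∈ M.E, ∃ C, IsCircuit M✶ C ∧ C.ncard ≤ ℓ₂ ∧ e ∈ C := by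
    intro e he
    obtain ⟨X, hX1, hX2, hX3⟩ := Set.exists_subsuperset_card_eq
      (show {e} ⊆ M.E by simpa using he)
      (show Set.ncard {e} ≤ t₂ by rw [Set.ncard_singleton]; omega) hnt₂
    obtain ⟨C, hC1, hC2, hC3⟩ := hQ.2 X hX2 hX3
    exact ⟨C, hC1, le_of_eq hC2, hC3 (hX1 rfl)⟩
  obtain ⟨B, hB⟩ := M.exists_isBase
  have hBE : B ⊆ M.E := hB.subset_ground
  have hBfin : B.Finite := hE.subset hBE
  set r := B.ncard with hrdef
  have hnr : n ≤ r * ℓ₂ := ground_card_le M hE ℓ₂ hcov hB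
  have h2t : 2 * t₁ * ℓ₂ ≤ n := by omega
  have hr2t : 2 * t₁ ≤ r := Nat.le_of_mul_le_mul_right (h2t.trans hnr) hℓ₂
  -- Finset versions
  set Bf := hBfin.toFinset with hBf
  set Ef := hE.toFinset with hEf
  have hBfcard : Bf.card = r := (Set.ncard_eq_toFinset_card _ hBfin).symm
  have hEfcard : Ef.card = n := (Set.ncard_eq_toFinset_card _ hE).symm
  set s := Finset.powersetCard t₁ Bf with hs
  have hscard : s.card = r.choose t₁ := by
    rw [hs, Finset.card_powersetCard, hBfcard]
  -- choice of a circuit through each t₁-subset of B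
  set F : Finset α → Set α := fun X =>
    if h : (X : Set α) ⊆ M.E ∧ (X : Set α).ncard = t₁ then (hQ.1 X h.1 h.2).choose else ∅
    with hFdef
  have hFE : ∀ X : Finset α, F X ⊆ M.E := by
    intro X
    rw [hFdef]
    dsimp only
    split_ifs with h
    · exact csub ((hQ.1 X h.1 h.2).choose_spec).1
    · exact Set.empty_subset _
  set f : Finset α → Finset α := fun X => (hE.subset (hFE X)).toFinset with hfdef
  have hfcoe : ∀ X, ((f X : Finset α) : Set α) = F X := fun X => Set.Finite.coe_toFinset _
  have hsmem : ∀ X ∈ s, (X : Set α) ⊆ M.E ∧ (X : Set α).ncard = t₁ := by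
    intro X hX
    rw [hs, Finset.mem_powersetCard] at hX
    refine ⟨fun x hx => hBE ((hBfin.mem_toFinset).1 (hX.1 hx)), ?_⟩
    rw [Set.ncard_coe_finset]
    exact hX.2
  have hfspec : ∀ X ∈ s, IsCircuit M (F X) ∧ (F X).ncard = ℓ₁ ∧ (X : Set α) ⊆ F X := by
    intro X hX
    have h := hsmem X hX
    rw [hFdef]
    dsimp only
    rw [dif_pos h]
    exact (hQ.1 X h.1 h.2).choose_spec
  have hfcard : ∀ X ∈ s, (f X).card = ℓ₁ := by
    intro X hX
    rw [hfdef]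
    dsimp only
    rw [← Set.ncard_eq_toFinset_card _ _]
    exact (hfspec X hX).2.1
  have hXsubf : ∀ X ∈ s, X ⊆ f X := by
    intro X hX
    rw [← Finset.coe_subset, hfcoe]
    exact (hfspec X hX).2.2
  set t := s.image f with ht
  -- bound 1 : fibres of f have size ≤ 2^ℓ₁
  have hbound1 : s.card ≤ 2 ^ ℓ₁ * t.card := by
    apply Finset.card_le_mul_card_image
    intro Cb hCb
    obtain ⟨X0, hX0s, hX0⟩ := Finset.mem_image.1 hCb
    have hCbcard : Cb.card = ℓ₁ := by rw [← hX0]; exact hfcard X0 hX0s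
    calc (s.filter (fun X => f X = Cb)).card ≤ Cb.powerset.card := by
          apply Finset.card_le_card
          intro X hX
          rw [Finset.mem_filter] at hX
          rw [Finset.mem_powerset, ← hX.2]
          exact hXsubf X hX.1
      _ = 2 ^ ℓ₁ := by rw [Finset.card_powerset, hCbcard]
  -- properties of members of t
  have htmem : ∀ Cb ∈ t, IsCircuit M (Cb : Set α) ∧ Cb.card = ℓ₁ ∧ (Cb \ Bf).card ≤ k := by
    intro Cb hCb
    obtain ⟨X, hXs, rfl⟩ := Finset.mem_image.1 hCb
    have hspec := hfspec X hXs
    have hco := hfcoe X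
    have hXBf : X ⊆ Bf := (Finset.mem_powersetCard.1 (hs ▸ hXs)).1
    have hXcard : X.card = t₁ := (Finset.mem_powersetCard.1 (hs ▸ hXs)).2
    refine ⟨by rw [hco]; exact hspec.1, hfcard X hXs, ?_⟩
    have h1 : f X \ Bf ⊆ f X \ X := by
      intro x hx
      rw [Finset.mem_sdiff] at hx ⊢
      exact ⟨hx.1, fun h => hx.2 (hXBf h)⟩
    calc (f X \ Bf).card ≤ (f X \ X).card := Finset.card_le_card h1
      _ = (f X).card - X.card := Finset.card_sdiff_of_subset (hXsubf X hXs)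
      _ = ℓ₁ - t₁ := by rw [hfcard X hXs, hXcard]
  -- bound 2 : fibres of σ (the part outside B) have size ≤ 2^(k ℓ₁)
  set σ : Finset α → Finset α := fun Cb => Cb \ Bf with hσ
  have hbound2 : t.card ≤ 2 ^ (k * ℓ₁) * (t.image σ).card := by
    apply Finset.card_le_mul_card_image
    intro D hD
    set fib := t.filter (fun Cb => σ Cb = D) with hfib
    set l : List (Set α) := fib.toList.map (fun Cb : Finset α => (Cb : Set α)) with hl
    have hfibt : ∀ Cb ∈ fib, Cb ∈ t ∧ Cb \ Bf = D := by
      intro Cb hCb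
      have := Finset.mem_filter.1 hCb
      exact ⟨this.1, this.2⟩
    have hlmem : ∀ C ∈ l, IsCircuit M C ∧ C.Finite ∧ C.ncard ≤ ℓ₁ := by
      intro C hC
      obtain ⟨Cb, hCbfib, rfl⟩ := List.mem_map.1 hC
      have hCbt := (hfibt Cb (Finset.mem_toList.1 hCbfib)).1
      refine ⟨(htmem Cb hCbt).1, Cb.finite_toSet, ?_⟩
      rw [Set.ncard_coe_finset]
      exact le_of_eq (htmem Cb hCbt).2.1
    obtain ⟨Y, hYU, hYcl, hYcard⟩ := core M ℓ₁ l hlmem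
    obtain ⟨Cb0, hCb0t, hCb0D⟩ := Finset.mem_image.1 hD
    have hDk : D.card ≤ k := by
      rw [← hCb0D]
      exact (htmem Cb0 hCb0t).2.2
    have hDE : (D : Set α) ⊆ M.E := by
      rw [← hCb0D]
      intro x hx
      exact csub (htmem Cb0 hCb0t).1 (Finset.mem_sdiff.1 hx).1
    set V : Set α := B ∪ (D : Set α) with hV
    have hUV : lU l ⊆ V := by
      apply lU_subset
      intro C hC
      obtain ⟨Cb, hCbfib, rfl⟩ := List.mem_map.1 hC
      obtain ⟨hCbt, hCbD⟩ := hfibt Cb (Finset.mem_toList.1 hCbfib)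
      intro x hx
      by_cases hxB : x ∈ Bf
      · exact Or.inl ((hBfin.mem_toFinset).1 hxB)
      · refine Or.inr ?_
        rw [← hCbD]
        have : x ∈ Cb := by exact_mod_cast hx
        simp only [Finset.coe_sdiff, Set.mem_diff, Finset.mem_coe]
        exact ⟨this, fun h => hxB h⟩
    have hVE : V ⊆ M.E := Set.union_subset hBE hDE
    have hsp : V ⊆ M.closure (V \ Y) := by
      intro x hx
      by_cases hxU : x ∈ lU l
      · have hsub2 : lU l \ Y ⊆ V \ Y := Set.diff_subset_diff_left hUV
        exact (M.closure_subset_closure hsub2) (hYcl hxU)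
      · have hxY : x ∉ Y := fun h => hxU (hYU h)
        exact M.subset_closure _ (Set.diff_subset.trans hVE) ⟨hx, hxY⟩
    have hYV : Y ⊆ V := hYU.trans hUV
    have hbnd := card_bound_of_spanning hE hVE hYV hsp hB Set.subset_union_left
    have hVcard : V.ncard ≤ B.ncard + D.card := by
      calc V.ncard ≤ B.ncard + (D : Set α).ncard := Set.ncard_union_le _ _
        _ = B.ncard + D.card := by rw [Set.ncard_coe_finset]
    have hYk : Y.ncard ≤ k := by omega
    have hUcard : (lU l).ncard ≤ k * ℓ₁ :=
      hYcard.trans (Nat.mul_le_mul_right _ hYk)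
    have hUfin : (lU l).Finite := hE.subset (hUV.trans hVE)
    have hfibsub : fib ⊆ hUfin.toFinset.powerset := by
      intro Cb hCb
      rw [Finset.mem_powerset]
      have hsub3 : (Cb : Set α) ⊆ lU l :=
        subset_lU (List.mem_map.2 ⟨Cb, Finset.mem_toList.2 hCb, rfl⟩)
      intro x hx
      exact (hUfin.mem_toFinset).2 (hsub3 hx)
    calc fib.card ≤ hUfin.toFinset.powerset.card := Finset.card_le_card hfibsub
      _ = 2 ^ hUfin.toFinset.card := Finset.card_powerset _
      _ ≤ 2 ^ (k * ℓ₁) := Nat.pow_le_pow_right (by norm_num)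
          (by rw [← Set.ncard_eq_toFinset_card _ hUfin]; exact hUcard)
  -- bound 3 : number of signatures
  have hbound3 : (t.image σ).card ≤ (k + 1) * n ^ k := by
    have hsub : t.image σ ⊆ (Finset.range (k+1)).biUnion
        (fun j => Finset.powersetCard j Ef) := by
      intro D hD
      obtain ⟨Cb, hCbt, rfl⟩ := Finset.mem_image.1 hD
      rw [Finset.mem_biUnion]
      refine ⟨(Cb \ Bf).card,
        Finset.mem_range.2 (Nat.lt_succ_of_le (htmem Cb hCbt).2.2), ?_⟩
      rw [Finset.mem_powersetCard]
      refine ⟨?_, rfl⟩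
      intro x hx
      exact (hE.mem_toFinset).2 (csub (htmem Cb hCbt).1 (Finset.mem_sdiff.1 hx).1)
    calc (t.image σ).card
        ≤ ((Finset.range (k+1)).biUnion (fun j => Finset.powersetCard j Ef)).card :=
          Finset.card_le_card hsub
      _ ≤ ∑ j ∈ Finset.range (k+1), (Finset.powersetCard j Ef).card :=
          Finset.card_biUnion_le
      _ ≤ ∑ _j ∈ Finset.range (k+1), n ^ k := by
          apply Finset.sum_le_sum
          intro j hj
          rw [Finset.card_powersetCard, hEfcard]
          calc n.choose j ≤ n ^ j := Nat.choose_le_pow n j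
            _ ≤ n ^ k := Nat.pow_le_pow_right hn1
                (Nat.lt_succ_iff.1 (Finset.mem_range.1 hj))
      _ = (k+1) * n ^ k := by rw [Finset.sum_const, Finset.card_range, smul_eq_mul]
  -- combine
  have hchain : r.choose t₁ ≤ 2 ^ ℓ₁ * (2 ^ (k * ℓ₁) * ((k + 1) * n ^ k)) := by
    calc r.choose t₁ = s.card := hscard.symm
      _ ≤ 2 ^ ℓ₁ * t.card := hbound1
      _ ≤ 2 ^ ℓ₁ * (2 ^ (k*ℓ₁) * (t.image σ).card) := Nat.mul_le_mul_left _ hbound2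
      _ ≤ 2 ^ ℓ₁ * (2 ^ (k*ℓ₁) * ((k + 1) * n ^ k)) :=
          Nat.mul_le_mul_left _ (Nat.mul_le_mul_left _ hbound3)
  have hlow : (r + 1 - t₁) ^ t₁ ≤ Nat.factorial t₁ * r.choose t₁ := by
    rw [← Nat.descFactorial_eq_factorial_mul_choose]
    exact Nat.pow_sub_le_descFactorial r t₁
  have hr1 : r ≤ 2 * (r + 1 - t₁) := by omega
  have hkt : k + 1 ≤ t₁ := by omega
  have hfinal : n ^ t₁ ≤ K * n ^ k := by
    calc n ^ t₁ ≤ (r * ℓ₂) ^ t₁ := Nat.pow_le_pow_left hnr t₁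
      _ = r ^ t₁ * ℓ₂ ^ t₁ := mul_pow r ℓ₂ t₁
      _ ≤ (2 * (r + 1 - t₁)) ^ t₁ * ℓ₂ ^ t₁ :=
          Nat.mul_le_mul_right _ (Nat.pow_le_pow_left hr1 t₁)
      _ = 2 ^ t₁ * (r + 1 - t₁) ^ t₁ * ℓ₂ ^ t₁ := by rw [mul_pow]
      _ ≤ 2 ^ t₁ * (Nat.factorial t₁ * r.choose t₁) * ℓ₂ ^ t₁ :=
          Nat.mul_le_mul_right _ (Nat.mul_le_mul_left _ hlow)
      _ ≤ 2 ^ t₁ * (Nat.factorial t₁ * (2 ^ ℓ₁ * (2 ^ (k * ℓ₁) * ((k + 1) * n ^ k)))) * ℓ₂ ^ t₁ :=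
          Nat.mul_le_mul_right _ (Nat.mul_le_mul_left _ (Nat.mul_le_mul_left _ hchain))
      _ = (2 ^ t₁ * Nat.factorial t₁ * 2 ^ ℓ₁ * 2 ^ (k * ℓ₁) * (k + 1) * ℓ₂ ^ t₁) * n ^ k := by
          ring
      _ ≤ (2 ^ t₁ * Nat.factorial t₁ * 2 ^ ℓ₁ * 2 ^ (t₁ * ℓ₁) * t₁ * ℓ₂ ^ t₁) * n ^ k := by
          have h1 : 2 ^ (k * ℓ₁) ≤ 2 ^ (t₁ * ℓ₁) :=
            Nat.pow_le_pow_right (by norm_num) (Nat.mul_le_mul_right _ (by omega))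
          gcongr
      _ = K * n ^ k := by rw [hK]
  have hnK : n ≤ K := by
    have h1 : n ^ k * n ≤ n ^ k * K := by
      calc n ^ k * n = n ^ (k + 1) := (pow_succ n k).symm
        _ ≤ n ^ t₁ := Nat.pow_le_pow_right hn1 hkt
        _ ≤ K * n ^ k := hfinal
        _ = n ^ k * K := Nat.mul_comm _ _
    exact Nat.le_of_mul_le_mul_left h1 (Nat.pow_pos hn1)
  omega

end QuadAux


theorem statement4 (t₁ ℓ₁ t₂ ℓ₂ : ℕ) (ht₁ : 0 < t₁) (hℓ₁ : 0 < ℓ₁) (ht₂ : 0 < t₂)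
    (hℓ₂ : 0 < ℓ₂) (hlt : ℓ₁ < 2 * t₁ ∨ ℓ₂ < 2 * t₂) :
    ∃ N : ℕ, ∀ {α : Type u} (M : Matroid α), M.E.Finite →
      HasQuadProperty M t₁ ℓ₁ t₂ ℓ₂ → M.E.ncard < N := by
  rcases hlt with h | h
  · obtain ⟨N, hN⟩ := QuadAux.main t₁ ℓ₁ t₂ ℓ₂ ht₂ hℓ₂ h
    exact ⟨N, fun {α} M hE hQ => hN M hE hQ⟩
  · obtain ⟨N, hN⟩ := QuadAux.main t₂ ℓ₂ t₁ ℓ₁ ht₁ hℓ₁ h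
    refine ⟨N, fun {α} M hE hQ => ?_⟩
    have hdual : HasQuadProperty M✶ t₂ ℓ₂ t₁ ℓ₁ := by
      constructor
      · intro X hX hc
        exact hQ.2 X hX hc
      · intro X hX hc
        obtain ⟨C, hC, h2, h3⟩ := hQ.1 X hX hc
        refine ⟨C, ?_, h2, h3⟩
        show IsCircuit M✶✶ C
        rwa [Matroid.dual_dual]
    have hres := hN M✶ (by rw [Matroid.dual_ground]; exact hE) hdual
    rwa [Matroid.dual_ground] at hres
end

section
/- Let M be a finite matroid with the (t,2t)-property. If M has a t-echidna (S₁, …, S_n) with n ≥ 3t − 1, then (S₁, …, S_n) is also a t-coechidna of M, i.e. the union of any t of the S_i is a cocircuit of M. -/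
open Set

lemma circuit_cocircuit_orth {α : Type*} {M : Matroid α} {C K : Set α} {e : α}
    (hC : IsCircuit M C) (hK : IsCocircuit M K) (h : C ∩ K = {e}) : False := by
  have heCK : e ∈ C ∩ K := h ▸ rfl
  have hCE : C ⊆ M.E := hC.1.subset_ground
  have hCd : M.Indep (C \ {e}) := by
    have hss : C \ {e} ⊂ C := Set.sdiff_singleton_ssubset.2 heCK.1
    have hnd := hC.2 _ hss
    exact (Matroid.not_dep_iff (Set.diff_subset.trans hCE)).1 hnd
  have hKd : M✶.Indep (K \ {e}) := by
    have heK : e ∈ K := heCK.2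
    have hss : K \ {e} ⊂ K := Set.sdiff_singleton_ssubset.2 heK
    have hnd := hK.2 _ hss
    have hKE : K ⊆ M✶.E := hK.1.subset_ground
    exact (Matroid.not_dep_iff (Set.diff_subset.trans hKE)).1 hnd
  obtain ⟨-, B0, hB0, hdisj0⟩ := Matroid.dual_indep_iff_exists'.1 hKd
  obtain ⟨B, hB, hCB, hBsub⟩ := hCd.exists_isBase_subset_union_isBase hB0
  obtain ⟨z, hzK, hzB⟩ := (Matroid.dual_dep_iff_forall.1 hK.1).1 B hB
  have hze : z = e := by
    by_contra hne
    have hzKe : z ∈ K \ {e} := ⟨hzK, hne⟩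
    rcases hBsub hzB with hz | hz
    · exact hz.2 (h ▸ ⟨hz.1, hzK⟩ : z ∈ ({e} : Set α))
    · exact hdisj0.ne_of_mem hzKe hz rfl
  have hCsubB : C ⊆ B := by
    intro y hy
    by_cases hye : y = e
    · exact hye ▸ hze ▸ hzB
    · exact hCB ⟨hy, hye⟩
  exact hC.1.1 (hB.indep.subset hCsubB)

/-- `M` has the `(t,ℓ)`-property: every `t`-element subset of the ground set is contained
in an `ℓ`-element circuit and an `ℓ`-element cocircuit. -/
def HasTLProperty {α : Type*} (M : Matroid α) (t ℓ : ℕ) : Prop :=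
  ∀ X ⊆ M.E, X.ncard = t →
    (∃ C, IsCircuit M C ∧ C.ncard = ℓ ∧ X ⊆ C) ∧
    (∃ C, IsCocircuit M C ∧ C.ncard = ℓ ∧ X ⊆ C)

/-- A `t`-echidna of order `n` in `M`: a partition `(S 1, …, S n)` of a subset of the
ground set into `2`-element sets such that the union of any `t` of them is a circuit. -/
def IsEchidna {α : Type*} (M : Matroid α) (t : ℕ) {n : ℕ} (S : Fin n → Set α) : Prop :=
  (∀ i, (S i).ncard = 2) ∧ (∀ i, S i ⊆ M.E) ∧
    (∀ i j, i ≠ j → Disjoint (S i) (S j)) ∧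
    ∀ I : Finset (Fin n), I.card = t → IsCircuit M (⋃ i ∈ I, S i)

theorem statement5 {α : Type*} (M : Matroid α) (hfin : M.E.Finite) (t n : ℕ) (ht : 0 < t)
    (hprop : HasTLProperty M t (2 * t)) (hn : 3 * t - 1 ≤ n)
    (S : Fin n → Set α) (hech : IsEchidna M t S) :
    IsEchidna M✶ t S := by
  classical
  obtain ⟨hcard, hSE, hdisj, hcirc⟩ := hech
  have hSfin : ∀ i, (S i).Finite := fun i => hfin.subset (hSE i)
  refine ⟨hcard, hSE, hdisj, ?_⟩
  intro I hI
  have hSne : ∀ i, (S i).Nonempty :=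
    fun i => Set.nonempty_of_ncard_ne_zero (by rw [hcard i]; norm_num)
  choose x hx using hSne
  set X : Set α := x '' ↑I with hXdef
  have hXE : X ⊆ M.E := by rintro _ ⟨i, hi, rfl⟩; exact hSE i (hx i)
  have hinj : Set.InjOn x ↑I := by
    intro i hi j hj hij
    by_contra hne
    exact (hdisj i j hne).ne_of_mem (hx i) (hx j) hij
  have hXcard : X.ncard = t := by
    rw [hXdef, Set.ncard_image_of_injOn hinj, Set.ncard_coe_finset, hI]
  obtain ⟨Cst, hCst, hCstcard, hXC⟩ := (hprop X hXE hXcard).2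
  have hCstE : Cst ⊆ M.E := hCst.1.subset_ground
  have hCstfin : Cst.Finite := hfin.subset hCstE
  have hclaim : ∀ j : Fin n, ∀ e : α, S j ∩ Cst ≠ {e} := by
    intro j e heq
    have hej : e ∈ S j ∩ Cst := heq ▸ rfl
    set J : Finset (Fin n) := Finset.univ.filter (fun i => (S i ∩ Cst).Nonempty) with hJdef
    have hJne : ∀ i ∈ J, (S i ∩ Cst).Nonempty := fun i hi => (Finset.mem_filter.1 hi).2
    have hy : ∀ i : Fin n, ∃ z : α, i ∈ J → z ∈ S i ∩ Cst := by
      intro i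
      by_cases h : i ∈ J
      · obtain ⟨z, hz⟩ := hJne i h; exact ⟨z, fun _ => hz⟩
      · exact ⟨e, fun h' => absurd h' h⟩
    choose y hy using hy
    have hyinj : Set.InjOn y ↑J := by
      intro i hi j' hj hij
      by_contra hne
      exact (hdisj i j' hne).ne_of_mem (hy i hi).1 (hy j' hj).1 hij
    have hJcard : J.card ≤ 2 * t := by
      have himg : y '' ↑J ⊆ Cst := by rintro _ ⟨i, hi, rfl⟩; exact (hy i hi).2
      have hle := Set.ncard_le_ncard himg hCstfin
      rwa [Set.ncard_image_of_injOn hyinj, Set.ncard_coe_finset, hCstcard] at hle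
    have hcompl : t - 1 ≤ Jᶜ.card := by
      rw [Finset.card_compl, Fintype.card_fin]
      omega
    obtain ⟨K, hKsub, hKcard⟩ := Finset.exists_subset_card_eq hcompl
    have hjJ : j ∈ J := Finset.mem_filter.2 ⟨Finset.mem_univ _, ⟨e, hej⟩⟩
    have hjK : j ∉ K := fun h => (Finset.mem_compl.1 (hKsub h)) hjJ
    have hLcard : (insert j K).card = t := by
      rw [Finset.card_insert_of_notMem hjK, hKcard]; omega
    have hCL := hcirc (insert j K) hLcard
    have hinter : (⋃ i ∈ (insert j K : Finset (Fin n)), S i) ∩ Cst = {e} := by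
      apply Set.Subset.antisymm
      · rintro z ⟨hzU, hzC⟩
        simp only [Set.mem_iUnion] at hzU
        obtain ⟨i, hiL, hzi⟩ := hzU
        rcases Finset.mem_insert.1 hiL with rfl | hiK
        · exact heq ▸ (⟨hzi, hzC⟩ : z ∈ S i ∩ Cst)
        · exact absurd (Finset.mem_filter.2 ⟨Finset.mem_univ _, ⟨z, hzi, hzC⟩⟩)
            (Finset.mem_compl.1 (hKsub hiK))
      · rw [Set.singleton_subset_iff]
        exact ⟨Set.mem_biUnion (Finset.mem_insert_self j K) hej.1, hej.2⟩
    exact circuit_cocircuit_orth hCL hCst hinter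
  have hsub : ∀ i ∈ I, S i ⊆ Cst := by
    intro i hi
    have h1 : x i ∈ S i ∩ Cst := ⟨hx i, hXC ⟨i, hi, rfl⟩⟩
    have hfin2 : (S i ∩ Cst).Finite := (hSfin i).inter_of_left _
    have hle : (S i ∩ Cst).ncard ≤ 2 :=
      hcard i ▸ Set.ncard_le_ncard Set.inter_subset_left (hSfin i)
    have hne1 : (S i ∩ Cst).ncard ≠ 1 := by
      intro h
      obtain ⟨e, he⟩ := Set.ncard_eq_one.1 h
      exact hclaim i e he
    have hpos : 0 < (S i ∩ Cst).ncard := (Set.ncard_pos hfin2).2 ⟨x i, h1⟩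
    have h2 : (S i).ncard ≤ (S i ∩ Cst).ncard := by rw [hcard i]; omega
    have heq := Set.eq_of_subset_of_ncard_le Set.inter_subset_left h2 (hSfin i)
    exact Set.inter_eq_left.1 heq
  have hUsub : (⋃ i ∈ I, S i) ⊆ Cst := Set.iUnion₂_subset hsub
  have hUeq : (⋃ i ∈ I, S i) = ↑(I.biUnion (fun i => (hSfin i).toFinset)) := by
    rw [Finset.coe_biUnion]
    simp [Set.Finite.coe_toFinset]
  have hUcard : (⋃ i ∈ I, S i).ncard = 2 * t := by
    rw [hUeq, Set.ncard_coe_finset, Finset.card_biUnion]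
    · have : ∀ i ∈ I, ((hSfin i).toFinset).card = 2 := by
        intro i _
        rw [← Set.ncard_eq_toFinset_card (S i) (hSfin i), hcard i]
      rw [Finset.sum_congr rfl this, Finset.sum_const, hI, smul_eq_mul, mul_comm]
    · intro i _ j _ hij
      rw [Function.onFun, Finset.disjoint_left]
      intro a ha hb
      exact (hdisj i j hij).ne_of_mem ((hSfin i).mem_toFinset.1 ha)
        ((hSfin j).mem_toFinset.1 hb) rfl
  have hfinal : (⋃ i ∈ I, S i) = Cst :=
    Set.eq_of_subset_of_ncard_le hUsub (by rw [hUcard, hCstcard]) hCstfin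
  rw [hfinal]
  exact hCst
end

section
/- Let M be a finite matroid with the (t,2t)-property, where t ≥ 2. If M has a t-echidna (S₁, …, S_n) with n ≥ 4t − 3, then (S₁, …, S_n) extends to a partition of E(M) that is both a t-echidna and a t-coechidna of M; that is, there exist m ≥ n and 2-element sets S_{n+1}, …, S_m such that (S₁, …, S_m) is a partition of E(M), the union of any t of the S_i is a circuit of M, and the union of any t of the S_i is a cocircuit of M. -/
open Set

section Aux


variable {α : Type*} {M : Matroid α} {C D : Set α} {e : α}

lemma IsCircuit.subset_ground (h : IsCircuit M C) : C ⊆ M.E := h.1.subset_ground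

lemma IsCocircuit.subset_ground (h : IsCocircuit M D) : D ⊆ M.E := h.1.subset_ground

lemma IsCircuit.indep_diff (h : IsCircuit M C) (he : e ∈ C) : M.Indep (C \ {e}) := by
  have hss : C \ {e} ⊂ C := sdiff_singleton_ssubset.mpr he
  have := h.2 _ hss
  exact (M.not_dep_iff ((diff_subset).trans h.subset_ground)).mp this

lemma IsCircuit.mem_closure (h : IsCircuit M C) (he : e ∈ C) : e ∈ M.closure (C \ {e}) := by
  have hI := h.indep_diff he
  have hdep : M.Dep (insert e (C \ {e})) := by
    rw [insert_diff_singleton, insert_eq_of_mem he]; exact h.1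
  exact ((hI.insert_dep_iff).mp hdep).1

lemma orth (hC : IsCircuit M C) (hD : IsCocircuit M D) (h : C ∩ D = {e}) : False := by
  have heC : e ∈ C := (h ▸ (mem_singleton e) : e ∈ C ∩ D).1
  have heD : e ∈ D := (h ▸ (mem_singleton e) : e ∈ C ∩ D).2
  have hDE : D ⊆ M.E := hD.subset_ground
  have hcl : e ∈ M.closure (C \ {e}) := hC.mem_closure heC
  have hsub : C \ {e} ⊆ M.E \ D := by
    rintro x ⟨hxC, hxe⟩
    refine ⟨hC.subset_ground hxC, fun hxD => hxe ?_⟩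
    have : x ∈ C ∩ D := ⟨hxC, hxD⟩
    rw [h] at this; exact this
  have hcoind : M.Coindep (D \ {e}) := by
    have hss : D \ {e} ⊂ D := sdiff_singleton_ssubset.mpr heD
    have := hD.2 _ hss
    exact Matroid.coindep_def.mpr <| (M✶.not_dep_iff (by
      rw [Matroid.dual_ground]; exact (diff_subset).trans hDE)).mp this
  have hsp : M.Spanning (M.E \ (D \ {e})) := hcoind.compl_spanning
  have hset : M.E \ (D \ {e}) = insert e (M.E \ D) := by
    rw [diff_diff_right]
    rw [inter_eq_self_of_subset_right (singleton_subset_iff.mpr (hDE heD))]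
    rw [union_singleton]
  rw [hset] at hsp
  have hecl : e ∈ M.closure (M.E \ D) := M.closure_subset_closure hsub hcl
  have hclosure : M.closure (M.E \ D) = M.E := by
    have h1 : M.closure (insert e (M.E \ D)) = M.E :=
      (M.spanning_iff_closure_eq (insert_subset (hDE heD) diff_subset)).mp hsp
    rwa [Matroid.closure_insert_eq_of_mem_closure hecl] at h1
  have hspan : M.Spanning (M.E \ D) := (M.spanning_iff_closure_eq diff_subset).mpr hclosure
  have : M.Coindep D := (M.coindep_iff_compl_spanning hDE).mpr hspan
  exact hD.1.not_indep this.indep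


end Aux

section Count


variable {α : Type*} {n t : ℕ} {S : Fin n → Set α}

/-- encard of a union of spines over a finset of indices. -/
lemma encard_spine_biUnion (hfin : ∀ i, (S i).Finite) (h2 : ∀ i, (S i).ncard = 2)
    (hdisj : ∀ i j, i ≠ j → Disjoint (S i) (S j)) (I : Finset (Fin n)) :
    (⋃ i ∈ I, S i).encard = 2 * I.card := by
  classical
  induction I using Finset.induction with
  | empty => simp
  | @insert a I ha ih =>
    rw [Finset.set_biUnion_insert]
    have hd : Disjoint (S a) (⋃ i ∈ I, S i) := by
      rw [disjoint_iUnion₂_right]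
      exact fun i hi => hdisj a i (by rintro rfl; exact ha hi)
    rw [encard_union_eq hd, ih, Finset.card_insert_of_notMem ha]
    have : (S a).encard = 2 := by
      rw [← (hfin a).cast_ncard_eq, h2 a]; rfl
    rw [this]
    push_cast
    ring

lemma spine_biUnion_finite (hfin : ∀ i, (S i).Finite) (I : Finset (Fin n)) :
    (⋃ i ∈ I, S i).Finite :=
  I.finite_toSet.biUnion (fun i _ => hfin i)


end Count

section Main


variable {α : Type*} {n t : ℕ} {S : Fin n → Set α} {M : Matroid α}

lemma IsCocircuit.subset_ground' {D : Set α} (h : IsCocircuit M D) : D ⊆ M.E := h.1.subset_ground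

/-- Step 1: a cocircuit with at most `2t` elements meeting a spine contains it. -/
lemma spine_full_of_cocircuit (hfinE : M.E.Finite) (ht : 2 ≤ t) (hn : 3 * t - 1 ≤ n)
    (hech : IsEchidna M t S) {D : Set α} (hD : IsCocircuit M D) (hDcard : D.encard ≤ 2 * t)
    {i : Fin n} (hne : (S i ∩ D).Nonempty) : S i ⊆ D := by
  classical
  obtain ⟨h2, hE, hdisj, hcirc⟩ := hech
  have hfinS : ∀ j, (S j).Finite := fun j => hfinE.subset (hE j)
  by_contra hns
  obtain ⟨y, hyS, hyD⟩ := not_subset.mp hns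
  obtain ⟨x, hxS, hxD⟩ := hne
  have hxy : x ≠ y := fun h => hyD (h ▸ hxD)
  -- every element of `S i` is `x` or `y`
  have hmem : ∀ z ∈ S i, z = x ∨ z = y := by
    obtain ⟨a, b, hab, hiab⟩ := Set.ncard_eq_two.mp (h2 i)
    intro z hz
    rw [hiab] at hz hxS hyS
    rcases hxS with rfl | rfl <;> rcases hyS with rfl | rfl <;>
      rcases hz with rfl | rfl <;> tauto
  have hSiD : S i ∩ D = {x} := by
    apply Set.Subset.antisymm
    · rintro z ⟨hzS, hzD⟩
      rcases hmem z hzS with rfl | rfl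
      · rfl
      · exact absurd hzD hyD
    · exact singleton_subset_iff.mpr ⟨hxS, hxD⟩
  -- the set of spines meeting D
  have hfinD : D.Finite := hfinE.subset hD.subset_ground'
  set B : Finset (Fin n) := Finset.univ.filter (fun j => (S j ∩ D).Nonempty) with hB
  have hiB : i ∈ B := by
    simp only [hB, Finset.mem_filter, Finset.mem_univ, true_and]
    exact ⟨x, hxS, hxD⟩
  have hBcard : B.card ≤ 2 * t := by
    have hf : ∀ j : Fin n, j ∈ B → (if h : (S j ∩ D).Nonempty then h.choose else x) ∈
        hfinD.toFinset := by
      intro j hj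
      simp only [hB, Finset.mem_filter, Finset.mem_univ, true_and] at hj
      rw [dif_pos hj]
      exact hfinD.mem_toFinset.mpr hj.choose_spec.2
    have hinj : Set.InjOn (fun j => if h : (S j ∩ D).Nonempty then h.choose else x) B := by
      intro j hj k hk hjk
      simp only [hB, Finset.coe_filter, mem_setOf_eq, Finset.mem_coe, Finset.mem_univ,
        true_and] at hj hk
      simp only [dif_pos hj, dif_pos hk] at hjk
      by_contra hne
      exact (hdisj j k hne).le_bot ⟨hj.choose_spec.1, hjk ▸ hk.choose_spec.1⟩
    have := Finset.card_le_card_of_injOn _ hf hinj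
    refine this.trans ?_
    rw [← Set.ncard_eq_toFinset_card D hfinD]
    have : (D.ncard : ℕ∞) ≤ ((2 * t : ℕ) : ℕ∞) := by
      rw [hfinD.cast_ncard_eq]; exact_mod_cast hDcard
    exact_mod_cast this
  -- choose t-1 spines avoiding D
  have hGcard : t - 1 ≤ (Finset.univ \ B).card := by
    rw [Finset.card_sdiff_of_subset (Finset.subset_univ B), Finset.card_univ, Fintype.card_fin]
    omega
  obtain ⟨J, hJG, hJcard⟩ := Finset.exists_subset_card_eq hGcard
  have hiJ : i ∉ J := fun h => by
    have := hJG h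
    rw [Finset.mem_sdiff] at this
    exact this.2 hiB
  have hJD : ∀ j ∈ J, S j ∩ D = ∅ := by
    intro j hj
    have := hJG hj
    rw [Finset.mem_sdiff] at this
    have := this.2
    simp only [hB, Finset.mem_filter, Finset.mem_univ, true_and] at this
    exact not_nonempty_iff_eq_empty.mp this
  set I' : Finset (Fin n) := insert i J with hI'
  have hI'card : I'.card = t := by
    rw [hI', Finset.card_insert_of_notMem hiJ, hJcard]; omega
  have hC := hcirc I' hI'card
  apply orth hC hD
  apply Set.Subset.antisymm
  · rintro z ⟨hzC, hzD⟩
    simp only [mem_iUnion, exists_prop] at hzC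
    obtain ⟨j, hjI, hzS⟩ := hzC
    rw [hI', Finset.mem_insert] at hjI
    rcases hjI with rfl | hjJ
    · have : z ∈ S j ∩ D := ⟨hzS, hzD⟩
      rwa [hSiD] at this
    · have : z ∈ S j ∩ D := ⟨hzS, hzD⟩
      rw [hJD j hjJ] at this
      exact absurd this (notMem_empty z)
  · refine singleton_subset_iff.mpr ⟨?_, hxD⟩
    simp only [mem_iUnion, exists_prop]
    exact ⟨i, by simp [hI'], hxS⟩


/-- choose a transversal of the spines -/
lemma exists_transversal (h2 : ∀ i : Fin n, (S i).ncard = 2) :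
    ∃ x : Fin n → α, ∀ i, x i ∈ S i := by
  have : ∀ i : Fin n, ∃ a, a ∈ S i := by
    intro i
    have : (S i).Nonempty := Set.nonempty_of_ncard_ne_zero (by rw [h2 i]; omega)
    exact this
  exact ⟨fun i => (this i).choose, fun i => (this i).choose_spec⟩

/-- Step 2: every union of `t` spines is a cocircuit. -/
lemma cocirc_unions (hfinE : M.E.Finite) (ht : 2 ≤ t) (hn : 3 * t - 1 ≤ n)
    (hprop : HasTLProperty M t (2 * t)) (hech : IsEchidna M t S)
    (I : Finset (Fin n)) (hI : I.card = t) : IsCocircuit M (⋃ i ∈ I, S i) := by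
  classical
  obtain ⟨x, hx⟩ := exists_transversal hech.1
  obtain ⟨h2, hE, hdisj, hcirc⟩ := hech
  have hfinS : ∀ j, (S j).Finite := fun j => hfinE.subset (hE j)
  have hxinj : Set.InjOn x ↑I := by
    intro j _ k _ hjk
    by_contra hne
    exact (hdisj j k hne).le_bot ⟨hx j, hjk ▸ hx k⟩
  set X : Set α := x '' ↑I with hX
  have hXE : X ⊆ M.E := by
    rintro _ ⟨j, _, rfl⟩
    exact hE j (hx j)
  have hXcard : X.ncard = t := by
    have h1 : X.encard = t := by
      rw [hX, hxinj.encard_image, encard_coe_eq_coe_finsetCard, hI]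
    have hXfin : X.Finite := hfinE.subset hXE
    have h2' := hXfin.cast_ncard_eq
    have : (X.ncard : ℕ∞) = (t : ℕ∞) := by rw [h2', h1]
    exact_mod_cast this
  obtain ⟨D, hD, hDcard, hXD⟩ := (hprop X hXE hXcard).2
  have hfinD : D.Finite := hfinE.subset hD.subset_ground'
  have hDen : D.encard = 2 * t := by
    rw [← hfinD.cast_ncard_eq, hDcard]; push_cast; ring
  have hfull : ∀ j ∈ I, S j ⊆ D := by
    intro j hj
    exact spine_full_of_cocircuit hfinE ht hn ⟨h2, hE, hdisj, hcirc⟩ hD hDen.le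
      ⟨x j, hx j, hXD ⟨j, hj, rfl⟩⟩
  have hsub : (⋃ i ∈ I, S i) ⊆ D := iUnion₂_subset hfull
  have : (⋃ i ∈ I, S i) = D := by
    apply hfinD.eq_of_subset_of_encard_le' hsub
    rw [hDen, encard_spine_biUnion hfinS h2 hdisj I, hI]
  rwa [this]

/-- Step 3: a circuit with at most `2t` elements meeting a spine contains it. -/
lemma spine_full_of_circuit (hfinE : M.E.Finite) (ht : 2 ≤ t) (hn : 3 * t - 1 ≤ n)
    (hprop : HasTLProperty M t (2 * t)) (hech : IsEchidna M t S)
    {C : Set α} (hC : IsCircuit M C) (hCcard : C.encard ≤ 2 * t)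
    {i : Fin n} (hne : (S i ∩ C).Nonempty) : S i ⊆ C := by
  have hechd : IsEchidna M✶ t S :=
    ⟨hech.1, fun i => by rw [Matroid.dual_ground]; exact hech.2.1 i, hech.2.2.1,
      fun I hI => cocirc_unions hfinE ht hn hprop hech I hI⟩
  have hCc : IsCocircuit M✶ C := by
    show IsCircuit M✶✶ C
    rwa [Matroid.dual_dual]
  exact spine_full_of_cocircuit (M := M✶) (by rwa [Matroid.dual_ground]) ht hn hechd hCc hCcard hne

lemma ncard_of_encard_eq {s : Set α} {k : ℕ} (h : s.encard = k) : s.ncard = k := by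
  rw [Set.ncard_def, h]; simp

/-- Generic step: given `e` outside the spines and `t-1` spine indices `J`, any `2t`-sized
"circuit-like" set through `e` and a transversal of `J` has the form
`{e, g} ∪ (spines of J)` with `g` outside the spines. -/
lemma exists_partner (hfinE : M.E.Finite) (ht : 2 ≤ t) (hn : 3 * t - 1 ≤ n)
    (hech : IsEchidna M t S) {P : Set α → Prop}
    (hget : ∀ X ⊆ M.E, X.ncard = t → ∃ C, P C ∧ C.ncard = 2 * t ∧ X ⊆ C)
    (hground : ∀ C, P C → C ⊆ M.E)
    (hfull : ∀ C, P C → C.encard ≤ 2 * t → ∀ i : Fin n, (S i ∩ C).Nonempty → S i ⊆ C)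
    {e : α} (he : e ∈ M.E) (heS : e ∉ ⋃ i, S i)
    (J : Finset (Fin n)) (hJ : J.card = t - 1) :
    ∃ g, g ∈ M.E ∧ g ∉ ⋃ i, S i ∧ g ≠ e ∧ P (insert e (insert g (⋃ j ∈ J, S j))) := by
  classical
  obtain ⟨x, hx⟩ := exists_transversal hech.1
  obtain ⟨h2, hE, hdisj, hcirc⟩ := hech
  have hfinS : ∀ j, (S j).Finite := fun j => hfinE.subset (hE j)
  set U : Set α := ⋃ j ∈ J, S j with hU
  have hUS : U ⊆ ⋃ i, S i := iUnion₂_subset fun j _ => subset_iUnion S j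
  have heU : e ∉ U := fun h => heS (hUS h)
  have hUfin : U.Finite := spine_biUnion_finite hfinS J
  have hUen : U.encard = ((2 * (t - 1) : ℕ) : ℕ∞) := by
    rw [hU, encard_spine_biUnion hfinS h2 hdisj J, hJ]; push_cast; ring
  -- the t-element set X
  have hxinj : Set.InjOn x ↑J := by
    intro j _ k _ hjk
    by_contra hne
    exact (hdisj j k hne).le_bot ⟨hx j, hjk ▸ hx k⟩
  set X : Set α := insert e (x '' ↑J) with hX
  have hXE : X ⊆ M.E := by
    rw [hX]
    refine insert_subset he ?_
    rintro _ ⟨j, _, rfl⟩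
    exact hE j (hx j)
  have hexJ : e ∉ x '' ↑J := by
    rintro ⟨j, _, rfl⟩
    exact heS (mem_iUnion.mpr ⟨j, hx j⟩)
  have hXcard : X.ncard = t := by
    apply ncard_of_encard_eq
    rw [hX, encard_insert_of_notMem hexJ, hxinj.encard_image, encard_coe_eq_coe_finsetCard, hJ]
    have : ((t - 1 : ℕ) : ℕ∞) + 1 = ((t - 1 + 1 : ℕ) : ℕ∞) := by push_cast; ring
    rw [this]
    congr 1
    omega
  obtain ⟨C, hPC, hCcard, hXC⟩ := hget X hXE hXcard
  have hCE : C ⊆ M.E := hground C hPC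
  have hCfin : C.Finite := hfinE.subset hCE
  have hCen : C.encard = 2 * t := by
    rw [← hCfin.cast_ncard_eq, hCcard]; push_cast; ring
  have hfullJ : ∀ j ∈ J, S j ⊆ C := by
    intro j hj
    exact hfull C hPC hCen.le j ⟨x j, hx j, hXC (mem_insert_of_mem _ ⟨j, hj, rfl⟩)⟩
  set A : Set α := insert e U with hA
  have hAC : A ⊆ C := by
    rw [hA]
    exact insert_subset (hXC (mem_insert _ _)) (iUnion₂_subset hfullJ)
  have hAen : A.encard = ((2 * (t - 1) + 1 : ℕ) : ℕ∞) := by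
    rw [hA, encard_insert_of_notMem heU, hUen]; push_cast; ring
  have hAfin : A.Finite := hCfin.subset hAC
  have hAn : A.ncard = 2 * (t - 1) + 1 := ncard_of_encard_eq hAen
  have hdiff : (C \ A).ncard = 1 := by
    rw [Set.ncard_diff hAC hAfin, hCcard, hAn]
    omega
  obtain ⟨g, hg⟩ := Set.ncard_eq_one.mp hdiff
  have hgCA : g ∈ C \ A := hg ▸ mem_singleton g
  have hCeq : C = insert e (insert g U) := by
    have h1 : C = A ∪ (C \ A) := (union_diff_cancel hAC).symm
    rw [hg] at h1
    rw [h1, union_singleton, hA, Set.insert_comm]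
  have hge : g ≠ e := fun h => hgCA.2 (h ▸ mem_insert e U)
  have hgS : g ∉ ⋃ i, S i := by
    intro hmem
    obtain ⟨i0, hgi0⟩ := mem_iUnion.mp hmem
    have hSi0C : S i0 ⊆ C := hfull C hPC hCen.le i0 ⟨g, hgi0, hgCA.1⟩
    by_cases hi0 : i0 ∈ J
    · exact hgCA.2 (mem_insert_of_mem _ (mem_biUnion hi0 hgi0))
    · have hsub : S i0 ⊆ {g} := by
        intro z hz
        rcases hCeq ▸ hSi0C hz with rfl | hz'
        · exact absurd (mem_iUnion.mpr ⟨i0, hz⟩) heS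
        · rcases hz' with rfl | hzU
          · rfl
          · obtain ⟨j, hjJ, hzj⟩ := mem_iUnion₂.mp hzU
            exact absurd hzj (Set.disjoint_left.mp (hdisj i0 j (fun h => hi0 (h ▸ hjJ))) hz)
      have : (S i0).ncard ≤ 1 := by
        have := Set.ncard_le_ncard hsub (finite_singleton g)
        simpa using this
      rw [h2 i0] at this
      omega
  exact ⟨g, hCE hgCA.1, hgS, hge, hCeq ▸ hPC⟩

lemma IsCircuit.subset_ground'' {C : Set α} (h : IsCircuit M C) : C ⊆ M.E := h.1.subset_ground

lemma inter_insert_eq_singleton {e f g : α} {U V : Set α} (hUV : Disjoint U V)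
    (heU : e ∉ U) (heV : e ∉ V) (hfV : f ∉ V) (hfg : f ≠ g) (hfe : f ≠ e)
    (hgU : g ∉ U) (hge : g ≠ e) :
    (insert e (insert f U)) ∩ (insert e (insert g V)) = {e} := by
  ext z
  simp only [mem_inter_iff, mem_insert_iff, mem_singleton_iff]
  constructor
  · rintro ⟨(rfl | rfl | hzU), (h | h | hzV)⟩
    · rfl
    · rfl
    · rfl
    · exact absurd h hfe
    · exact absurd h hfg
    · exact absurd hzV hfV
    · exact absurd (h ▸ hzU) heU
    · exact absurd (h ▸ hzU) hgU
    · exact absurd hzV (Set.disjoint_left.mp hUV hzU)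
  · rintro rfl
    exact ⟨Or.inl rfl, Or.inl rfl⟩

lemma disjoint_spine_biUnions (hdisj : ∀ i j : Fin n, i ≠ j → Disjoint (S i) (S j))
    {I J : Finset (Fin n)} (h : Disjoint I J) :
    Disjoint (⋃ i ∈ I, S i) (⋃ j ∈ J, S j) := by
  rw [Set.disjoint_left]
  intro z hzI hzJ
  obtain ⟨i, hiI, hzi⟩ := mem_iUnion₂.mp hzI
  obtain ⟨j, hjJ, hzj⟩ := mem_iUnion₂.mp hzJ
  have hij : i ≠ j := fun hh => Finset.disjoint_left.mp h hiI (hh ▸ hjJ)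
  exact Set.disjoint_left.mp (hdisj i j hij) hzi hzj

/-- The extension step: a new spine `{e, f}` through any point `e` outside the echidna. -/
lemma extend_echidna (hfinE : M.E.Finite) (ht : 2 ≤ t) (hn : 4 * t - 3 ≤ n)
    (hprop : HasTLProperty M t (2 * t)) (hech : IsEchidna M t S)
    {e : α} (he : e ∈ M.E) (heS : e ∉ ⋃ i, S i) :
    ∃ f, f ∈ M.E ∧ f ∉ ⋃ i, S i ∧ f ≠ e ∧
      ∀ J : Finset (Fin n), J.card = t - 1 →
        IsCircuit M (insert e (insert f (⋃ j ∈ J, S j))) := by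
  classical
  have hn' : 3 * t - 1 ≤ n := by omega
  have hdisj := hech.2.2.1
  have hgetC : ∀ J : Finset (Fin n), J.card = t - 1 → ∃ g, g ∈ M.E ∧ g ∉ ⋃ i, S i ∧ g ≠ e ∧
      IsCircuit M (insert e (insert g (⋃ j ∈ J, S j))) :=
    fun J hJ => exists_partner hfinE ht hn' hech (P := IsCircuit M)
      (fun X hX hXc => (hprop X hX hXc).1)
      (fun C hC => hC.subset_ground'')
      (fun C hC hCc i hi => spine_full_of_circuit hfinE ht hn' hprop hech hC hCc hi)
      he heS J hJ
  have hgetD : ∀ J : Finset (Fin n), J.card = t - 1 → ∃ g, g ∈ M.E ∧ g ∉ ⋃ i, S i ∧ g ≠ e ∧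
      IsCocircuit M (insert e (insert g (⋃ j ∈ J, S j))) :=
    fun J hJ => exists_partner hfinE ht hn' hech (P := IsCocircuit M)
      (fun X hX hXc => (hprop X hX hXc).2)
      (fun C hC => hC.subset_ground')
      (fun C hC hCc i hi => spine_full_of_cocircuit hfinE ht hn' hech hC hCc hi)
      he heS J hJ
  have hcardn : t - 1 ≤ (Finset.univ : Finset (Fin n)).card := by
    rw [Finset.card_univ, Fintype.card_fin]; omega
  obtain ⟨J₁, -, hJ₁⟩ := Finset.exists_subset_card_eq hcardn
  obtain ⟨f, hfE, hfS, hfe, hC₁⟩ := hgetC J₁ hJ₁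
  have heU : ∀ J : Finset (Fin n), e ∉ ⋃ j ∈ J, S j := by
    intro J h
    exact heS (iUnion₂_subset (fun j _ => subset_iUnion S j) h)
  have hfU : ∀ J : Finset (Fin n), f ∉ ⋃ j ∈ J, S j := by
    intro J h
    exact hfS (iUnion₂_subset (fun j _ => subset_iUnion S j) h)
  -- Claim: cocircuits through {e,f} and t-1 spines disjoint from J₁
  have hcocirc : ∀ J : Finset (Fin n), J.card = t - 1 → Disjoint J J₁ →
      IsCocircuit M (insert e (insert f (⋃ j ∈ J, S j))) := by
    intro J hJ hJJ₁
    obtain ⟨g, hgE, hgS, hge, hD⟩ := hgetD J hJ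
    by_cases hgf : g = f
    · rwa [hgf] at hD
    · exfalso
      have hgU : ∀ J' : Finset (Fin n), g ∉ ⋃ j ∈ J', S j := by
        intro J' h
        exact hgS (iUnion₂_subset (fun j _ => subset_iUnion S j) h)
      exact orth hC₁ hD
        (inter_insert_eq_singleton
          (disjoint_spine_biUnions hdisj hJJ₁.symm)
          (heU J₁) (heU J) (hfU J) (fun h => hgf (h.symm)) hfe (hgU J₁) hge)
  -- Claim: circuits through {e,f} and any t-1 spines
  refine ⟨f, hfE, hfS, hfe, ?_⟩
  intro J hJ
  obtain ⟨g, hgE, hgS, hge, hC'⟩ := hgetC J hJ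
  by_cases hgf : g = f
  · rwa [hgf] at hC'
  · exfalso
    have hcard' : t - 1 ≤ (Finset.univ \ (J ∪ J₁)).card := by
      rw [Finset.card_sdiff_of_subset (Finset.subset_univ _), Finset.card_univ, Fintype.card_fin]
      have h1 : (J ∪ J₁).card ≤ J.card + J₁.card := Finset.card_union_le J J₁
      omega
    obtain ⟨J', hJ'sub, hJ'card⟩ := Finset.exists_subset_card_eq hcard'
    have hJ'J₁ : Disjoint J' J₁ := by
      rw [Finset.disjoint_left]
      intro a haJ' haJ₁
      have := hJ'sub haJ'
      rw [Finset.mem_sdiff] at this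
      exact this.2 (Finset.mem_union_right _ haJ₁)
    have hJ'J : Disjoint J' J := by
      rw [Finset.disjoint_left]
      intro a haJ' haJ
      have := hJ'sub haJ'
      rw [Finset.mem_sdiff] at this
      exact this.2 (Finset.mem_union_left _ haJ)
    have hD' := hcocirc J' hJ'card hJ'J₁
    have hgU : ∀ J'' : Finset (Fin n), g ∉ ⋃ j ∈ J'', S j := by
      intro J'' h
      exact hgS (iUnion₂_subset (fun j _ => subset_iUnion S j) h)
    exact orth hC' hD'
      (inter_insert_eq_singleton
        (disjoint_spine_biUnions hdisj hJ'J.symm)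
        (heU J) (heU J') (hgU J') (fun h => hgf h) hge (hfU J) hfe)

section Snoc

variable {X : Set α}

lemma iUnion_snoc (S : Fin n → Set α) (X : Set α) :
    (⋃ i, (Fin.snoc S X : Fin (n+1) → Set α) i) = X ∪ ⋃ i, S i := by
  ext z
  simp only [mem_iUnion, mem_union]
  constructor
  · rintro ⟨i, hi⟩
    rcases Fin.eq_castSucc_or_eq_last i with ⟨j, rfl⟩ | rfl
    · rw [Fin.snoc_castSucc] at hi
      exact Or.inr ⟨j, hi⟩
    · rw [Fin.snoc_last] at hi
      exact Or.inl hi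
  · rintro (hz | ⟨j, hj⟩)
    · exact ⟨Fin.last n, by rwa [Fin.snoc_last]⟩
    · exact ⟨Fin.castSucc j, by rwa [Fin.snoc_castSucc]⟩

lemma biUnion_snoc_of_not_mem (S : Fin n → Set α) (X : Set α) {I : Finset (Fin (n + 1))}
    (hI : Fin.last n ∉ I) :
    ∃ I₀ : Finset (Fin n), I₀.card = I.card ∧
      (⋃ i ∈ I, (Fin.snoc S X : Fin (n+1) → Set α) i) = ⋃ i ∈ I₀, S i := by
  classical
  refine ⟨I.preimage Fin.castSucc (Fin.castSucc_injective n).injOn, ?_, ?_⟩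
  · rw [Finset.card_preimage]
    · symm
      rw [Finset.filter_true_of_mem]
      intro j hj
      have hjne : j ≠ Fin.last n := fun h => hI (h ▸ hj)
      exact ⟨j.castPred hjne, Fin.castSucc_castPred j hjne⟩
  · ext z
    simp only [mem_iUnion, exists_prop, Finset.mem_preimage]
    constructor
    · rintro ⟨j, hjI, hz⟩
      have hjne : j ≠ Fin.last n := fun h => hI (h ▸ hjI)
      refine ⟨j.castPred hjne, by rwa [Fin.castSucc_castPred], ?_⟩
      have hj' : Fin.castSucc (j.castPred hjne) = j := Fin.castSucc_castPred j hjne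
      rw [← hj', Fin.snoc_castSucc] at hz
      exact hz
    · rintro ⟨i, hiI, hz⟩
      exact ⟨Fin.castSucc i, hiI, by rwa [Fin.snoc_castSucc]⟩

lemma biUnion_snoc_of_mem (S : Fin n → Set α) (X : Set α) {I : Finset (Fin (n + 1))}
    (hI : Fin.last n ∈ I) :
    ∃ I₀ : Finset (Fin n), I₀.card = I.card - 1 ∧
      (⋃ i ∈ I, (Fin.snoc S X : Fin (n+1) → Set α) i) = X ∪ ⋃ i ∈ I₀, S i := by
  classical
  obtain ⟨I₀, hI₀card, hI₀⟩ := biUnion_snoc_of_not_mem S X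
    (I := I.erase (Fin.last n)) (Finset.notMem_erase _ _)
  refine ⟨I₀, by rw [hI₀card, Finset.card_erase_of_mem hI], ?_⟩
  rw [← hI₀]
  conv_lhs => rw [← Finset.insert_erase hI]
  rw [Finset.set_biUnion_insert, Fin.snoc_last]

lemma snoc_echidna {M : Matroid α} (hech : IsEchidna M t S) (ht : 1 ≤ t) {e f : α}
    (he : e ∈ M.E) (hf : f ∈ M.E) (hef : e ≠ f)
    (heS : e ∉ ⋃ i, S i) (hfS : f ∉ ⋃ i, S i)
    (hcirc : ∀ J : Finset (Fin n), J.card = t - 1 →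
      IsCircuit M (insert e (insert f (⋃ j ∈ J, S j)))) :
    IsEchidna M t (Fin.snoc S ({e, f} : Set α) : Fin (n+1) → Set α) := by
  classical
  obtain ⟨h2, hE, hdisj, hcircS⟩ := hech
  have hne : ∀ i : Fin n, e ∉ S i ∧ f ∉ S i := by
    intro i
    exact ⟨fun h => heS (mem_iUnion.mpr ⟨i, h⟩), fun h => hfS (mem_iUnion.mpr ⟨i, h⟩)⟩
  refine ⟨?_, ?_, ?_, ?_⟩
  · intro i
    rcases Fin.eq_castSucc_or_eq_last i with ⟨j, rfl⟩ | rfl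
    · rw [Fin.snoc_castSucc]; exact h2 j
    · rw [Fin.snoc_last]; exact Set.ncard_pair hef
  · intro i
    rcases Fin.eq_castSucc_or_eq_last i with ⟨j, rfl⟩ | rfl
    · rw [Fin.snoc_castSucc]; exact hE j
    · rw [Fin.snoc_last]; exact insert_subset he (singleton_subset_iff.mpr hf)
  · intro i j hij
    rcases Fin.eq_castSucc_or_eq_last i with ⟨i', rfl⟩ | rfl <;>
      rcases Fin.eq_castSucc_or_eq_last j with ⟨j', rfl⟩ | rfl
    · rw [Fin.snoc_castSucc, Fin.snoc_castSucc]
      exact hdisj i' j' (fun h => hij (h ▸ rfl))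
    · rw [Fin.snoc_castSucc, Fin.snoc_last]
      rw [Set.disjoint_right]
      rintro z (rfl | rfl)
      · exact (hne i').1
      · exact (hne i').2
    · rw [Fin.snoc_last, Fin.snoc_castSucc]
      rw [Set.disjoint_left]
      rintro z (rfl | rfl)
      · exact (hne j').1
      · exact (hne j').2
    · exact absurd rfl hij
  · intro I hI
    by_cases hlast : Fin.last n ∈ I
    · obtain ⟨I₀, hI₀card, hI₀⟩ := biUnion_snoc_of_mem S _ hlast
      rw [hI₀]
      have : ({e, f} : Set α) ∪ ⋃ i ∈ I₀, S i = insert e (insert f (⋃ i ∈ I₀, S i)) := by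
        rw [insert_eq e ({f} : Set α), union_assoc, singleton_union, singleton_union]
      rw [this]
      exact hcirc I₀ (by omega)
    · obtain ⟨I₀, hI₀card, hI₀⟩ := biUnion_snoc_of_not_mem S _ hlast
      rw [hI₀]
      exact hcircS I₀ (by rw [hI₀card, hI])

end Snoc

lemma base_case {M : Matroid α} (hfinE : M.E.Finite) (ht : 2 ≤ t)
    (hprop : HasTLProperty M t (2 * t)) {n : ℕ} {S : Fin n → Set α}
    (hn : 4 * t - 3 ≤ n) (hech : IsEchidna M t S) (hempty : M.E \ ⋃ i, S i = ∅) :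
    ∃ m, ∃ hnm : n ≤ m, ∃ T : Fin m → Set α,
      (∀ i : Fin n, T (Fin.castLE hnm i) = S i) ∧
      (⋃ i, T i) = M.E ∧ IsEchidna M t T ∧ IsEchidna M✶ t T := by
  have hUE : ⋃ i, S i = M.E :=
    Set.Subset.antisymm (iUnion_subset hech.2.1) (diff_eq_empty.mp hempty)
  refine ⟨n, le_rfl, S, fun i => ?_, hUE, hech, ?_⟩
  · congr 1
  · exact ⟨hech.1, fun i => by rw [Matroid.dual_ground]; exact hech.2.1 i, hech.2.2.1,
      fun I hI => cocirc_unions hfinE ht (by omega) hprop hech I hI⟩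

lemma main_aux {M : Matroid α} (hfinE : M.E.Finite) (ht : 2 ≤ t)
    (hprop : HasTLProperty M t (2 * t)) :
    ∀ k n (S : Fin n → Set α), 4 * t - 3 ≤ n → IsEchidna M t S →
      (M.E \ ⋃ i, S i).ncard ≤ k →
    ∃ m, ∃ hnm : n ≤ m, ∃ T : Fin m → Set α,
      (∀ i : Fin n, T (Fin.castLE hnm i) = S i) ∧
      (⋃ i, T i) = M.E ∧ IsEchidna M t T ∧ IsEchidna M✶ t T := by
  intro k
  induction k with
  | zero =>
    intro n S hn hech hcard
    refine base_case hfinE ht hprop hn hech ?_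
    have hfind : (M.E \ ⋃ i, S i).Finite := hfinE.subset diff_subset
    rw [← Set.ncard_eq_zero hfind]
    omega
  | succ k ih =>
    intro n S hn hech hcard
    by_cases hempty : M.E \ ⋃ i, S i = ∅
    · exact base_case hfinE ht hprop hn hech hempty
    · obtain ⟨e, heE, heS⟩ := nonempty_iff_ne_empty.mpr hempty
      obtain ⟨f, hfE, hfS, hfe, hcirc⟩ := extend_echidna hfinE ht hn hprop hech heE heS
      set S' : Fin (n + 1) → Set α := Fin.snoc S ({e, f} : Set α) with hS'
      have hech' : IsEchidna M t S' :=
        snoc_echidna hech (by omega) heE hfE (fun h => hfe h.symm) heS hfS hcirc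
      have hUS' : (⋃ i, S' i) = ({e, f} : Set α) ∪ ⋃ i, S i := iUnion_snoc S _
      have hmeas : (M.E \ ⋃ i, S' i).ncard ≤ k := by
        have hss : M.E \ ⋃ i, S' i ⊂ M.E \ ⋃ i, S i := by
          constructor
          · intro z hz
            rw [hUS'] at hz
            exact ⟨hz.1, fun h => hz.2 (mem_union_right _ h)⟩
          · intro hsub
            have : e ∈ M.E \ ⋃ i, S' i := hsub ⟨heE, heS⟩
            rw [hUS'] at this
            exact this.2 (mem_union_left _ (mem_insert e {f}))
        have := Set.ncard_lt_ncard hss (hfinE.subset diff_subset)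
        omega
      obtain ⟨m, hnm1, T, hT, hTU, hTe, hTc⟩ := ih (n + 1) S' (by omega) hech' hmeas
      refine ⟨m, (Nat.le_succ n).trans hnm1, T, fun i => ?_, hTU, hTe, hTc⟩
      have h1 := hT (Fin.castSucc i)
      have h2 : Fin.castLE ((Nat.le_succ n).trans hnm1) i = Fin.castLE hnm1 (Fin.castSucc i) :=
        Fin.ext (by simp)
      rw [h2, h1, hS', Fin.snoc_castSucc]

theorem statement7' {M : Matroid α} (hfin : M.E.Finite) (t n : ℕ) (ht : 2 ≤ t)
    (hprop : HasTLProperty M t (2 * t)) (hn : 4 * t - 3 ≤ n)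
    (S : Fin n → Set α) (hech : IsEchidna M t S) :
    ∃ (m : ℕ) (hnm : n ≤ m) (T : Fin m → Set α),
      (∀ i : Fin n, T (Fin.castLE hnm i) = S i) ∧
      (⋃ i, T i) = M.E ∧ IsEchidna M t T ∧ IsEchidna M✶ t T :=
  main_aux hfin ht hprop (M.E \ ⋃ i, S i).ncard n S hn hech le_rfl


end Main

theorem statement7 {α : Type*} (M : Matroid α) (hfin : M.E.Finite) (t n : ℕ) (ht : 2 ≤ t)
    (hprop : HasTLProperty M t (2 * t)) (hn : 4 * t - 3 ≤ n)
    (S : Fin n → Set α) (hech : IsEchidna M t S) :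
    ∃ (m : ℕ) (hnm : n ≤ m) (T : Fin m → Set α),
      (∀ i : Fin n, T (Fin.castLE hnm i) = S i) ∧
      (⋃ i, T i) = M.E ∧ IsEchidna M t T ∧ IsEchidna M✶ t T :=
  statement7' hfin t n ht hprop hn S hech
end

section
/- Let M be a finite matroid with the (t,2t)-property. Then M has no restriction isomorphic to the uniform matroid U_{t,3t}; that is, there is no X ⊆ E(M) with M|X ≅ U_{t,3t}. -/
open Set

theorem statement9 {α : Type*} (M : Matroid α) (hfin : M.E.Finite) (t : ℕ) (ht : 0 < t)
    (hprop : HasTLProperty M t (2 * t)) :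
    ¬ ∃ X ⊆ M.E, X.ncard = 3 * t ∧ ∀ Y ⊆ X, (M.Indep Y ↔ Y.ncard ≤ t) := by
  rintro ⟨X, hXE, hXcard, hX⟩
  have hXfin : X.Finite := hfin.subset hXE
  -- choose a t-element subset T of X
  obtain ⟨T, hTX, hTcard⟩ := Set.exists_subset_card_eq (show t ≤ X.ncard by omega)
  -- get a 2t-element cocircuit Cc containing T
  obtain ⟨-, Cc, hCc, hCccard, hTCc⟩ := hprop T (hTX.trans hXE) hTcard
  have hCcE : Cc ⊆ M.E := by
    have := hCc.1.subset_ground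
    rwa [Matroid.dual_ground] at this
  have hCcfin : Cc.Finite := hfin.subset hCcE
  -- X \ Cc has at least t elements
  have hdiff : t ≤ (X \ Cc).ncard := by
    have := Set.ncard_le_ncard_diff_add_ncard X Cc hCcfin
    omega
  obtain ⟨S, hSXC, hScard⟩ := Set.exists_subset_card_eq hdiff
  have hSX : S ⊆ X := hSXC.trans diff_subset
  have hSfin : S.Finite := hXfin.subset hSX
  -- pick e ∈ T
  obtain ⟨e, heT⟩ : T.Nonempty := Set.nonempty_of_ncard_ne_zero (by omega)
  have heCc : e ∈ Cc := hTCc heT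
  have heS : e ∉ S := fun h => (hSXC h).2 heCc
  -- S is independent, insert e S is dependent
  have hSindep : M.Indep S := (hX S hSX).2 (le_of_eq hScard)
  have hCdep : M.Dep (insert e S) := by
    rw [Matroid.dep_iff]
    constructor
    · intro hind
      have := (hX _ (Set.insert_subset (hTX heT) hSX)).1 hind
      rw [Set.ncard_insert_of_notMem heS hSfin, hScard] at this
      omega
    · exact Set.insert_subset (hXE (hTX heT)) (hSX.trans hXE)
  have heclS : e ∈ M.closure S :=
    (hSindep.mem_closure_iff_of_notMem heS).2 hCdep
  -- dual argument: Cc \ {e} is coindependent, Cc is not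
  have hssub : Cc \ {e} ⊂ Cc := Set.sdiff_singleton_ssubset.2 heCc
  have hcoind : M.Coindep (Cc \ {e}) := by
    rw [Matroid.coindep_def, Matroid.indep_iff_not_dep]
    exact ⟨hCc.2 _ hssub, by rw [Matroid.dual_ground]; exact diff_subset.trans hCcE⟩
  have hnotcoind : ¬ M.Coindep Cc := hCc.1.not_indep
  rw [Matroid.coindep_iff_closure_compl_eq_ground (diff_subset.trans hCcE)] at hcoind
  rw [Matroid.coindep_iff_closure_compl_eq_ground hCcE] at hnotcoind
  apply hnotcoind
  have hcompl : M.E \ (Cc \ {e}) = insert e (M.E \ Cc) := by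
    ext x
    simp only [mem_diff, mem_singleton_iff, mem_insert_iff, not_and, not_not]
    constructor
    · rintro ⟨hx, h⟩
      by_cases hxc : x ∈ Cc
      · exact Or.inl (h hxc)
      · exact Or.inr ⟨hx, hxc⟩
    · rintro (rfl | ⟨hx, hxc⟩)
      · exact ⟨hCcE heCc, fun _ => rfl⟩
      · exact ⟨hx, fun h => absurd h hxc⟩
  rw [hcompl] at hcoind
  have heclcompl : e ∈ M.closure (M.E \ Cc) := by
    refine M.closure_subset_closure ?_ heclS
    intro x hx
    exact ⟨hSX.trans hXE hx, fun h => heS (by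
      exact absurd h (fun hc => (hSXC hx).2 hc))⟩
  rwa [← M.closure_insert_closure_eq_closure_insert, Set.insert_eq_of_mem heclcompl,
    M.closure_closure] at hcoind
end
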